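/- arXiv:math/0609621 — 9 statements merged into one kernel-verified Lean document; each statement's English description precedes it below -/
import Mathlib

section
/- For any n-tuple (z_1,...,z_n) of complex numbers with |z_k| = 1 for all k, the maximum of |z_1^ν + z_2^ν + ... + z_n^ν| over ν = 1, ..., n²−n is at least √(n−1). -/
open Finset Complex

theorem power_sum_lower_bound (n : ℕ) (hn : 1 ≤ n) (z : Fin n → ℂ)
    (hz : ∀ k, ‖z k‖ = 1) :
    Real.sqrt ((n : ℝ) - 1) ≤
      sSup {x : ℝ | ∃ ν ∈ Finset.Icc 1 (n ^ 2 - n), x = ‖∑ k, z k ^ ν‖} := by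
  rcases eq_or_lt_of_le hn with h1 | h2
  · -- n = 1
    have hn1 : n = 1 := h1.symm
    subst hn1
    have hset : {x : ℝ | ∃ ν ∈ Finset.Icc 1 (1 ^ 2 - 1), x = ‖∑ k, z k ^ ν‖} = ∅ := by
      ext x
      simp
    rw [hset, Real.sSup_empty]
    norm_num
  · have hn2 : 2 ≤ n := h2
    set N := n ^ 2 - n with hN
    have hN1 : 1 ≤ N := by
      have h := Nat.mul_le_mul_right n hn2
      have hNn : N = n * n - n := by rw [hN, sq]
      omega
    have hNcast : (N : ℝ) = (n : ℝ) ^ 2 - (n : ℝ) := by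
      rw [hN]
      have : n ≤ n ^ 2 := by nlinarith
      push_cast [Nat.cast_sub this]
      ring
    have hne : (Finset.Icc 1 N).Nonempty := ⟨1, by simp [hN1]⟩
    set M := (Finset.Icc 1 N).sup' hne (fun ν => ‖∑ k, z k ^ ν‖) with hM
    have hM0 : 0 ≤ M := le_trans (norm_nonneg _)
      (Finset.le_sup' (fun ν => ‖∑ k, z k ^ ν‖) (by simp [hN1] : 1 ∈ Finset.Icc 1 N))
    -- basic fact: z k ^ m * conj (z k ^ m) = 1
    have key : ∀ (k : Fin n) (m : ℕ), z k ^ m * (starRingEnd ℂ) (z k ^ m) = 1 := by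
      intro k m
      rw [Complex.mul_conj]
      norm_cast
      rw [Complex.normSq_eq_norm_sq, norm_pow, hz]
      simp
    set U : ℕ → ℕ → ℂ := fun μ ν => ∑ k, z k ^ μ * (starRingEnd ℂ) (z k ^ ν) with hU
    have L1 : ∀ μ ν : ℕ, ν ≤ μ → U μ ν = ∑ k, z k ^ (μ - ν) := by
      intro μ ν hνμ
      apply Finset.sum_congr rfl
      intro k _
      have h : z k ^ μ = z k ^ (μ - ν) * z k ^ ν := by
        rw [← pow_add, Nat.sub_add_cancel hνμ]
      rw [h, mul_assoc, key, mul_one]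
    have L2 : ∀ μ ν : ℕ, U ν μ = (starRingEnd ℂ) (U μ ν) := by
      intro μ ν
      rw [map_sum]
      apply Finset.sum_congr rfl
      intro k _
      rw [map_mul, Complex.conj_conj, mul_comm]
    have habsle : ∀ μ ν : ℕ, μ < N + 1 → ν < μ → ‖U μ ν‖ ≤ M := by
      intro μ ν hμ hν
      rw [L1 μ ν (le_of_lt hν)]
      exact Finset.le_sup' (fun ν => ‖∑ k, z k ^ ν‖)
        (by simp only [Finset.mem_Icc]; omega)
    have habs : ∀ μ ν : ℕ, μ < N + 1 → ν < N + 1 → μ ≠ ν → ‖U μ ν‖ ≤ M := by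
      intro μ ν hμ hν hne'
      rcases lt_or_gt_of_ne hne' with h | h
      · rw [L2 ν μ, Complex.norm_conj]
        exact habsle ν μ hν h
      · exact habsle μ ν hμ h
    set T : Fin n → Fin n → ℂ := fun j k => ∑ μ ∈ Finset.range (N + 1),
      z j ^ μ * (starRingEnd ℂ) (z k ^ μ) with hT
    -- main identity
    set G : ℕ × ℕ → Fin n × Fin n → ℂ := fun p q =>
      z q.1 ^ p.1 * (starRingEnd ℂ) (z q.1 ^ p.2) *
        ((starRingEnd ℂ) (z q.2 ^ p.1) * z q.2 ^ p.2) with hG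
    have ident : ∑ μ ∈ Finset.range (N + 1), ∑ ν ∈ Finset.range (N + 1),
          U μ ν * (starRingEnd ℂ) (U μ ν)
        = ∑ j : Fin n, ∑ k : Fin n, T j k * (starRingEnd ℂ) (T j k) := by
      have e1 : ∀ μ ν : ℕ, U μ ν * (starRingEnd ℂ) (U μ ν)
          = ∑ q : Fin n × Fin n, G (μ, ν) q := by
        intro μ ν
        rw [Fintype.sum_prod_type, hU]
        simp only [map_sum, map_mul, Complex.conj_conj]
        rw [Finset.sum_mul_sum]
      have e2 : ∀ j k : Fin n, T j k * (starRingEnd ℂ) (T j k)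
          = ∑ p ∈ Finset.range (N + 1) ×ˢ Finset.range (N + 1), G p (j, k) := by
        intro j k
        rw [Finset.sum_product, hT]
        simp only [map_sum, map_mul, Complex.conj_conj]
        rw [Finset.sum_mul_sum]
        apply Finset.sum_congr rfl
        intro μ _
        apply Finset.sum_congr rfl
        intro ν _
        rw [hG]
        ring
      calc ∑ μ ∈ Finset.range (N + 1), ∑ ν ∈ Finset.range (N + 1),
            U μ ν * (starRingEnd ℂ) (U μ ν)
          = ∑ p ∈ Finset.range (N + 1) ×ˢ Finset.range (N + 1),
              ∑ q : Fin n × Fin n, G p q := by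
            rw [Finset.sum_product]
            exact Finset.sum_congr rfl fun μ _ =>
              Finset.sum_congr rfl fun ν _ => e1 μ ν
        _ = ∑ q : Fin n × Fin n,
              ∑ p ∈ Finset.range (N + 1) ×ˢ Finset.range (N + 1), G p q :=
            Finset.sum_comm
        _ = ∑ j : Fin n, ∑ k : Fin n, T j k * (starRingEnd ℂ) (T j k) := by
            rw [Fintype.sum_prod_type]
            exact Finset.sum_congr rfl fun j _ =>
              Finset.sum_congr rfl fun k _ => (e2 j k).symm
    -- pass to real parts
    have identR : ∑ μ ∈ Finset.range (N + 1), ∑ ν ∈ Finset.range (N + 1),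
          Complex.normSq (U μ ν)
        = ∑ j : Fin n, ∑ k : Fin n, Complex.normSq (T j k) := by
      have := ident
      simp only [Complex.mul_conj] at this
      exact_mod_cast this
    -- lower bound for right hand side
    have hTdiag : ∀ j : Fin n, T j j = ((N : ℂ) + 1) := by
      intro j
      rw [hT]
      simp only [key]
      rw [Finset.sum_const, Finset.card_range]
      ring
    have hRge : (n : ℝ) * ((N : ℝ) + 1) ^ 2 ≤
        ∑ j : Fin n, ∑ k : Fin n, Complex.normSq (T j k) := by
      have h1 : ∀ j : Fin n, Complex.normSq (T j j) = ((N : ℝ) + 1) ^ 2 := by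
        intro j
        rw [hTdiag j]
        rw [Complex.normSq_apply]
        simp
        ring
      calc (n : ℝ) * ((N : ℝ) + 1) ^ 2
          = ∑ j : Fin n, Complex.normSq (T j j) := by
            rw [Finset.sum_congr rfl (fun j _ => h1 j)]
            simp [Finset.sum_const]
        _ ≤ ∑ j : Fin n, ∑ k : Fin n, Complex.normSq (T j k) := by
            apply Finset.sum_le_sum
            intro j _
            exact Finset.single_le_sum (fun k _ => Complex.normSq_nonneg _)
              (Finset.mem_univ j)
    -- upper bound for left hand side
    have hUdiag : ∀ μ : ℕ, U μ μ = (n : ℂ) := by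
      intro μ
      rw [hU]
      simp only [key]
      simp
    have hLle : ∑ μ ∈ Finset.range (N + 1), ∑ ν ∈ Finset.range (N + 1),
          Complex.normSq (U μ ν)
        ≤ ((N : ℝ) + 1) * (((N : ℝ) + 1) * M ^ 2 + ((n : ℝ) ^ 2 - M ^ 2)) := by
      calc ∑ μ ∈ Finset.range (N + 1), ∑ ν ∈ Finset.range (N + 1), Complex.normSq (U μ ν)
          ≤ ∑ μ ∈ Finset.range (N + 1), ∑ ν ∈ Finset.range (N + 1),
              (if μ = ν then (n : ℝ) ^ 2 else M ^ 2) := by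
            apply Finset.sum_le_sum
            intro μ hμ
            apply Finset.sum_le_sum
            intro ν hν
            by_cases h : μ = ν
            · subst h
              rw [if_pos rfl, hUdiag μ]
              simp [Complex.normSq_apply, sq]
            · rw [if_neg h, ← Complex.sq_norm]
              have := habs μ ν (Finset.mem_range.mp hμ) (Finset.mem_range.mp hν) h
              nlinarith [norm_nonneg (U μ ν)]
        _ = ∑ μ ∈ Finset.range (N + 1),
              (((N : ℝ) + 1) * M ^ 2 + ((n : ℝ) ^ 2 - M ^ 2)) := by
            apply Finset.sum_congr rfl
            intro μ hμ
            calc ∑ ν ∈ Finset.range (N + 1), (if μ = ν then (n : ℝ) ^ 2 else M ^ 2)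
                = ∑ ν ∈ Finset.range (N + 1),
                    (M ^ 2 + if μ = ν then (n : ℝ) ^ 2 - M ^ 2 else 0) := by
                  apply Finset.sum_congr rfl
                  intro ν _
                  split_ifs <;> ring
              _ = ((N : ℝ) + 1) * M ^ 2 + ((n : ℝ) ^ 2 - M ^ 2) := by
                  rw [Finset.sum_add_distrib, Finset.sum_const, Finset.card_range,
                    Finset.sum_ite_eq, if_pos hμ]
                  ring
        _ = ((N : ℝ) + 1) * (((N : ℝ) + 1) * M ^ 2 + ((n : ℝ) ^ 2 - M ^ 2)) := by
            rw [Finset.sum_const, Finset.card_range]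
            ring
    -- combine
    have hMsq : (n : ℝ) - 1 ≤ M ^ 2 := by
      have hmain : (n : ℝ) * ((N : ℝ) + 1) ^ 2 ≤
          ((N : ℝ) + 1) * (((N : ℝ) + 1) * M ^ 2 + ((n : ℝ) ^ 2 - M ^ 2)) := by
        calc (n : ℝ) * ((N : ℝ) + 1) ^ 2
            ≤ ∑ j : Fin n, ∑ k : Fin n, Complex.normSq (T j k) := hRge
          _ = ∑ μ ∈ Finset.range (N + 1), ∑ ν ∈ Finset.range (N + 1),
                Complex.normSq (U μ ν) := identR.symm
          _ ≤ _ := hLle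
      have hnr : (2 : ℝ) ≤ (n : ℝ) := by exact_mod_cast hn2
      rw [hNcast] at hmain
      have hK : (0 : ℝ) < (n : ℝ) ^ 2 - (n : ℝ) + 1 := by nlinarith
      have h1' : ((n : ℝ) ^ 2 - (n : ℝ) + 1) * ((n : ℝ) * ((n : ℝ) ^ 2 - (n : ℝ) + 1))
          ≤ ((n : ℝ) ^ 2 - (n : ℝ) + 1) * (((n : ℝ) ^ 2 - (n : ℝ)) * M ^ 2 + (n : ℝ) ^ 2) := by
        linear_combination hmain
      have h1 : (n : ℝ) * ((n : ℝ) ^ 2 - (n : ℝ) + 1)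
          ≤ ((n : ℝ) ^ 2 - (n : ℝ)) * M ^ 2 + (n : ℝ) ^ 2 :=
        le_of_mul_le_mul_left h1' hK
      have h3 : (0 : ℝ) < (n : ℝ) * ((n : ℝ) - 1) := by nlinarith
      have h2 : ((n : ℝ) * ((n : ℝ) - 1)) * ((n : ℝ) - 1)
          ≤ ((n : ℝ) * ((n : ℝ) - 1)) * M ^ 2 := by linear_combination h1
      exact le_of_mul_le_mul_left h2 h3
    -- finish
    obtain ⟨ν₀, hν₀mem, hν₀⟩ := Finset.exists_mem_eq_sup' hne
      (fun ν => ‖∑ k, z k ^ ν‖)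
    have hMmem : M ∈ {x : ℝ | ∃ ν ∈ Finset.Icc 1 (n ^ 2 - n), x = ‖∑ k, z k ^ ν‖} :=
      ⟨ν₀, hν₀mem, hν₀⟩
    have hbdd : BddAbove {x : ℝ | ∃ ν ∈ Finset.Icc 1 (n ^ 2 - n), x = ‖∑ k, z k ^ ν‖} := by
      refine ⟨(n : ℝ), ?_⟩
      rintro x ⟨ν, _, rfl⟩
      calc ‖∑ k, z k ^ ν‖ ≤ ∑ k, ‖z k ^ ν‖ :=
            norm_sum_le _ _
        _ = (n : ℝ) := by
            simp only [norm_pow, hz, one_pow]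
            simp
    calc Real.sqrt ((n : ℝ) - 1) ≤ Real.sqrt (M ^ 2) := Real.sqrt_le_sqrt hMsq
      _ = M := Real.sqrt_sq hM0
      _ ≤ _ := le_csSup hbdd hMmem
end

section
/- Let (z_1,...,z_n) be unimodular complex numbers with S(ν) = ∑_{k=1}^n z_k^ν. If max_{ν=1,...,n²−n} |S(ν)| = √(n−1), then |S(ν)| = √(n−1) for every ν = 1, ..., n²−n. -/
open Finset Complex ComplexConjugate

private lemma swap4 {α β M : Type*} [AddCommMonoid M] (s : Finset α) (t : Finset β)
    (f : α → α → β → β → M) :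
    ∑ a ∈ s, ∑ b ∈ s, ∑ c ∈ t, ∑ d ∈ t, f a b c d
      = ∑ c ∈ t, ∑ d ∈ t, ∑ a ∈ s, ∑ b ∈ s, f a b c d := by
  calc ∑ a ∈ s, ∑ b ∈ s, ∑ c ∈ t, ∑ d ∈ t, f a b c d
      = ∑ a ∈ s, ∑ c ∈ t, ∑ b ∈ s, ∑ d ∈ t, f a b c d :=
        Finset.sum_congr rfl fun a _ => Finset.sum_comm
    _ = ∑ c ∈ t, ∑ a ∈ s, ∑ b ∈ s, ∑ d ∈ t, f a b c d := Finset.sum_comm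
    _ = ∑ c ∈ t, ∑ a ∈ s, ∑ d ∈ t, ∑ b ∈ s, f a b c d :=
        Finset.sum_congr rfl fun c _ => Finset.sum_congr rfl fun a _ => Finset.sum_comm
    _ = ∑ c ∈ t, ∑ d ∈ t, ∑ a ∈ s, ∑ b ∈ s, f a b c d :=
        Finset.sum_congr rfl fun c _ => Finset.sum_comm

theorem power_sum_equality_case (n : ℕ) (hn : 1 ≤ n) (z : Fin n → ℂ)
    (hz : ∀ k, ‖z k‖ = 1)
    (hmax : ∀ ν ∈ Finset.Icc 1 (n ^ 2 - n),
      ‖∑ k, z k ^ ν‖ ≤ Real.sqrt ((n : ℝ) - 1)) :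
    ∀ ν ∈ Finset.Icc 1 (n ^ 2 - n),
      ‖∑ k, z k ^ ν‖ = Real.sqrt ((n : ℝ) - 1) := by
  intro ν hν
  set N := n ^ 2 - n with hNdef
  rw [Finset.mem_Icc] at hν
  obtain ⟨hν1, hν2⟩ := hν
  have hc0 : (0:ℝ) ≤ (n:ℝ) - 1 := by
    have : (1:ℝ) ≤ (n:ℝ) := by exact_mod_cast hn
    linarith
  have hz1 : ∀ k, z k * conj (z k) = 1 := by
    intro k
    rw [Complex.mul_conj]
    norm_cast
    rw [← Complex.sq_norm, hz k]; norm_num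
  set A : ℕ → ℕ → ℂ := fun μ μ' => ∑ j, z j ^ μ * conj (z j ^ μ') with hA
  have hAdiag : ∀ μ, A μ μ = (n : ℂ) := by
    intro μ
    have h1 : A μ μ = ∑ _j : Fin n, (1:ℂ) :=
      Finset.sum_congr rfl fun j _ => by rw [map_pow, ← mul_pow, hz1 j, one_pow]
    simp [h1]
  have hAge : ∀ μ μ' : ℕ, μ' ≤ μ → A μ μ' = ∑ k, z k ^ (μ - μ') := by
    intro μ μ' h
    refine Finset.sum_congr rfl fun j _ => ?_
    have h2 : μ = (μ - μ') + μ' := by omega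
    rw [h2, pow_add, map_pow, mul_assoc, ← mul_pow, hz1 j, one_pow, mul_one,
      Nat.add_sub_cancel]
  have hAsym : ∀ μ μ', A μ' μ = conj (A μ μ') := by
    intro μ μ'
    simp [hA, map_sum, map_mul, Complex.conj_conj, mul_comm]
  -- bound on off-diagonal terms
  have hbound : ∀ μ μ', μ ≤ N → μ' ≤ N → μ ≠ μ' →
      Complex.normSq (A μ μ') ≤ (n:ℝ) - 1 := by
    have key : ∀ μ μ', μ ≤ N → μ' < μ → Complex.normSq (A μ μ') ≤ (n:ℝ) - 1 := by
      intro μ μ' h1 h2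
      rw [hAge μ μ' h2.le]
      have hm : μ - μ' ∈ Finset.Icc 1 N := by rw [Finset.mem_Icc]; omega
      have hb := hmax _ hm
      calc Complex.normSq (∑ k, z k ^ (μ - μ'))
          = ‖∑ k, z k ^ (μ - μ')‖ ^ 2 := (Complex.sq_norm _).symm
        _ ≤ Real.sqrt ((n:ℝ) - 1) ^ 2 := by
            exact pow_le_pow_left₀ (norm_nonneg _) hb 2
        _ = (n:ℝ) - 1 := Real.sq_sqrt hc0
    intro μ μ' h1 h2 h3
    rcases lt_or_gt_of_ne h3 with h | h
    · rw [hAsym, Complex.normSq_conj]; exact key μ' μ h2 h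
    · exact key μ μ' h1 h
  set B : Fin n → Fin n → ℂ :=
    fun j k => ∑ μ ∈ Finset.range (N+1), (z j * conj (z k)) ^ μ with hB
  -- the key identity
  have hAexp : ∀ μ μ', A μ μ' * conj (A μ μ')
      = ∑ j, ∑ k, (z j ^ μ * conj (z j ^ μ')) * conj (z k ^ μ * conj (z k ^ μ')) := by
    intro μ μ'
    rw [hA]
    rw [map_sum, Finset.sum_mul_sum]
  have hBexp : ∀ (j k : Fin n), B j k * conj (B j k)
      = ∑ μ ∈ Finset.range (N+1), ∑ μ' ∈ Finset.range (N+1),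
          (z j ^ μ * conj (z j ^ μ')) * conj (z k ^ μ * conj (z k ^ μ')) := by
    intro j k
    rw [hB]
    rw [map_sum, Finset.sum_mul_sum]
    refine Finset.sum_congr rfl fun μ _ => Finset.sum_congr rfl fun μ' _ => ?_
    simp only [map_mul, map_pow, Complex.conj_conj]
    ring
  have hcx : ∑ μ ∈ Finset.range (N+1), ∑ μ' ∈ Finset.range (N+1), A μ μ' * conj (A μ μ')
      = ∑ j, ∑ k, B j k * conj (B j k) := by
    calc ∑ μ ∈ Finset.range (N+1), ∑ μ' ∈ Finset.range (N+1), A μ μ' * conj (A μ μ')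
        = ∑ μ ∈ Finset.range (N+1), ∑ μ' ∈ Finset.range (N+1), ∑ j, ∑ k,
            (z j ^ μ * conj (z j ^ μ')) * conj (z k ^ μ * conj (z k ^ μ')) :=
          Finset.sum_congr rfl fun μ _ => Finset.sum_congr rfl fun μ' _ => hAexp μ μ'
      _ = ∑ j, ∑ k, ∑ μ ∈ Finset.range (N+1), ∑ μ' ∈ Finset.range (N+1),
            (z j ^ μ * conj (z j ^ μ')) * conj (z k ^ μ * conj (z k ^ μ')) :=
          swap4 _ _ _
      _ = ∑ j, ∑ k, B j k * conj (B j k) :=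
          Finset.sum_congr rfl fun j _ => Finset.sum_congr rfl fun k _ => (hBexp j k).symm
  simp only [Complex.mul_conj] at hcx
  have key : ∑ μ ∈ Finset.range (N+1), ∑ μ' ∈ Finset.range (N+1),
      Complex.normSq (A μ μ') = ∑ j, ∑ k, Complex.normSq (B j k) := by
    exact_mod_cast hcx
  -- replaces final sorry
  have hN1 : 1 ≤ N := le_trans hν1 hν2
  have hNcast : (N:ℝ) = (n:ℝ)^2 - (n:ℝ) := by
    rw [hNdef]
    push_cast [Nat.cast_sub (Nat.le_self_pow two_ne_zero n)]
    ring
  set s := Finset.range (N+1) with hs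
  set f : ℕ × ℕ → ℝ := fun p => Complex.normSq (A p.1 p.2) with hf
  have hP : ∑ p ∈ s ×ˢ s, f p = ∑ j, ∑ k, Complex.normSq (B j k) := by
    rw [Finset.sum_product]; exact key
  have hsplit : ∑ p ∈ s ×ˢ s, f p = ∑ p ∈ s.diag, f p + ∑ p ∈ s.offDiag, f p := by
    rw [← Finset.diag_union_offDiag s, Finset.sum_union (Finset.disjoint_diag_offDiag s)]
  have hdiag : ∑ p ∈ s.diag, f p = ((N:ℝ)+1) * (n:ℝ)^2 := by
    rw [Finset.sum_diag]
    have h1 : ∀ x ∈ s, f (x, x) = (n:ℝ)^2 := by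
      intro x _
      simp only [hf]
      rw [hAdiag x, Complex.normSq_natCast]
      ring
    rw [Finset.sum_congr rfl h1, Finset.sum_const, Finset.card_range, nsmul_eq_mul]
    push_cast
    ring
  have hBjj : ∀ j : Fin n, B j j = ((N+1 : ℕ) : ℂ) := by
    intro j
    have h1 : ∀ μ ∈ s, (z j * conj (z j))^μ = 1 := by
      intro μ _; rw [hz1 j, one_pow]
    calc B j j = ∑ μ ∈ s, (z j * conj (z j))^μ := rfl
      _ = ∑ _μ ∈ s, (1:ℂ) := Finset.sum_congr rfl h1
      _ = ((N+1 : ℕ) : ℂ) := by rw [Finset.sum_const, hs, Finset.card_range]; simp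
  have hlow : (n:ℝ) * ((N:ℝ)+1)^2 ≤ ∑ j, ∑ k, Complex.normSq (B j k) := by
    have h1 : ∀ j : Fin n, ((N:ℝ)+1)^2 ≤ ∑ k, Complex.normSq (B j k) := by
      intro j
      have h2 : Complex.normSq (B j j) ≤ ∑ k, Complex.normSq (B j k) :=
        Finset.single_le_sum (fun k _ => Complex.normSq_nonneg _) (Finset.mem_univ j)
      rw [hBjj j, Complex.normSq_natCast] at h2
      push_cast at h2
      nlinarith [h2]
    calc (n:ℝ) * ((N:ℝ)+1)^2 = ∑ _j : Fin n, ((N:ℝ)+1)^2 := by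
          rw [Finset.sum_const, Finset.card_univ, Fintype.card_fin, nsmul_eq_mul]
      _ ≤ ∑ j, ∑ k, Complex.normSq (B j k) := Finset.sum_le_sum fun j _ => h1 j
  have hmemrange : ∀ p : ℕ × ℕ, p ∈ s.offDiag → p.1 ≤ N ∧ p.2 ≤ N ∧ p.1 ≠ p.2 := by
    intro p hp
    rw [Finset.mem_offDiag] at hp
    obtain ⟨h1, h2, h3⟩ := hp
    rw [hs, Finset.mem_range] at h1 h2
    exact ⟨by omega, by omega, h3⟩
  have hboundf : ∀ p ∈ s.offDiag, f p ≤ (n:ℝ) - 1 := by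
    intro p hp
    obtain ⟨h1, h2, h3⟩ := hmemrange p hp
    exact hbound p.1 p.2 h1 h2 h3
  have hcard : s.offDiag.card = (N+1)*N := by
    rw [Finset.offDiag_card, hs, Finset.card_range]
    have : (N+1)*(N+1) = (N+1)*N + (N+1) := by ring
    omega
  have hmem0 : (ν, 0) ∈ s.offDiag := by
    rw [Finset.mem_offDiag]
    refine ⟨?_, ?_, ?_⟩
    · rw [hs, Finset.mem_range]; omega
    · rw [hs, Finset.mem_range]; omega
    · simp; omega
  have hsum_erase : ∑ p ∈ s.offDiag, f p
      = f (ν,0) + ∑ p ∈ s.offDiag.erase (ν,0), f p :=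
    (Finset.add_sum_erase _ _ hmem0).symm
  have herase_le : ∑ p ∈ s.offDiag.erase (ν,0), f p
      ≤ ((N+1)*N - 1 : ℕ) * ((n:ℝ) - 1) := by
    have h1 := Finset.sum_le_card_nsmul (s.offDiag.erase (ν,0)) f ((n:ℝ)-1)
      (fun p hp => hboundf p (Finset.mem_of_mem_erase hp))
    rw [Finset.card_erase_of_mem hmem0, hcard] at h1
    rw [nsmul_eq_mul] at h1
    exact h1
  have hcard1 : 1 ≤ (N+1)*N := by nlinarith [hN1]
  have hcastcard : (((N+1)*N - 1 : ℕ) : ℝ) = ((N:ℝ)+1)*(N:ℝ) - 1 := by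
    push_cast [Nat.cast_sub hcard1]
    ring
  have hid : (n:ℝ)*((N:ℝ)+1)^2 - ((N:ℝ)+1)*(n:ℝ)^2
      = ((n:ℝ)-1)*(((N:ℝ)+1)*(N:ℝ)) := by
    rw [hNcast]; ring
  have hge : (n:ℝ) - 1 ≤ f (ν,0) := by
    rw [hcastcard] at herase_le
    have hPle := hP ▸ hsplit
    linarith [hlow, hdiag, hsum_erase, herase_le, hid, hPle]
  have hfeq : f (ν,0) = (n:ℝ) - 1 :=
    le_antisymm (hboundf _ hmem0) hge
  have hA0 : A ν 0 = ∑ k, z k ^ ν := by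
    rw [hAge ν 0 (Nat.zero_le _), Nat.sub_zero]
  have hnsq : Complex.normSq (∑ k, z k ^ ν) = (n:ℝ) - 1 := by
    rw [← hA0]; exact hfeq
  rw [Complex.norm_def, hnsq]
end

section
/- Let (z_1,...,z_n) be an n-tuple of unimodular complex numbers. If ∑_{k=1}^n z_k^ν = 0 for all ν = 1, ..., n−1, then there exists a complex number w with |w| = 1 such that {z_1, ..., z_n} is exactly the set of n-th roots of w; that is, the z_k are the vertices of a regular n-gon on the unit circle. -/
open Finset Complex

theorem regular_ngon_of_power_sums_vanish (n : ℕ) (hn : 1 ≤ n) (z : Fin n → ℂ)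
    (hz : ∀ k, ‖z k‖ = 1)
    (hS : ∀ ν ∈ Finset.Icc 1 (n - 1), ∑ k, z k ^ ν = 0) :
    ∃ w : ℂ, ‖w‖ = 1 ∧ Set.range z = {x : ℂ | x ^ n = w} := by
  classical
  set s : Multiset ℂ := Finset.univ.val.map z with hs
  have hcard : Multiset.card s = n := by simp [hs]
  -- power sums vanish
  have hpsum : ∀ m ∈ Finset.Icc 1 (n - 1),
      (MvPolynomial.aeval z) (MvPolynomial.psum (Fin n) ℂ m) = 0 := by
    intro m hm
    have : (MvPolynomial.aeval z) (MvPolynomial.psum (Fin n) ℂ m) = ∑ k, z k ^ m := by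
      simp [MvPolynomial.psum]
    rw [this]
    exact hS m hm
  -- elementary symmetric functions vanish for 1 ≤ k ≤ n-1
  have hesymm : ∀ k ∈ Finset.Icc 1 (n - 1), s.esymm k = 0 := by
    intro k hk
    obtain ⟨hk1, hk2⟩ := Finset.mem_Icc.mp hk
    have hnewton := congrArg (MvPolynomial.aeval z)
      (MvPolynomial.mul_esymm_eq_sum (Fin n) ℂ k)
    simp only [map_mul, map_sum, map_pow, map_natCast, map_neg, map_one] at hnewton
    have hzero : ∀ a ∈ Finset.filter (fun a => a.1 < k) (Finset.HasAntidiagonal.antidiagonal k),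
        (-1 : ℂ) ^ a.1 * (MvPolynomial.aeval z) (MvPolynomial.esymm (Fin n) ℂ a.1) *
          (MvPolynomial.aeval z) (MvPolynomial.psum (Fin n) ℂ a.2) = 0 := by
      intro a ha
      rw [Finset.mem_filter, Finset.HasAntidiagonal.mem_antidiagonal] at ha
      have h2 : a.2 ∈ Finset.Icc 1 (n - 1) := by
        rw [Finset.mem_Icc]
        omega
      rw [hpsum a.2 h2, mul_zero]
    have hsum0 : ∑ a ∈ Finset.filter (fun a => a.1 < k) (Finset.HasAntidiagonal.antidiagonal k),
        (-1 : ℂ) ^ a.1 * (MvPolynomial.aeval z) (MvPolynomial.esymm (Fin n) ℂ a.1) *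
          (MvPolynomial.aeval z) (MvPolynomial.psum (Fin n) ℂ a.2) = 0 :=
      Finset.sum_eq_zero hzero
    rw [hsum0, mul_zero] at hnewton
    have hae : (MvPolynomial.aeval z) (MvPolynomial.esymm (Fin n) ℂ k) = s.esymm k := by
      rw [MvPolynomial.aeval_esymm_eq_multiset_esymm]
    rw [hae] at hnewton
    have hk0 : (k : ℂ) ≠ 0 := Nat.cast_ne_zero.mpr (by omega)
    exact (mul_eq_zero.mp hnewton).resolve_left hk0
  -- the polynomial ∏ (X - z k)
  set w : ℂ := (-1 : ℂ) ^ (n + 1) * s.esymm n with hw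
  set P : Polynomial ℂ := ∏ k, (Polynomial.X - Polynomial.C (z k)) with hP
  have hPprod : P = (s.map fun r => Polynomial.X - Polynomial.C r).prod := by
    rw [hP, Finset.prod_eq_multiset_prod, hs, Multiset.map_map]
    rfl
  have hmonic : P.Monic := Polynomial.monic_prod_of_monic _ _
    (fun k _ => Polynomial.monic_X_sub_C (z k))
  have hdeg : P.natDegree = n := by
    rw [hP, Polynomial.natDegree_prod _ _ (fun k _ => Polynomial.X_sub_C_ne_zero (z k))]
    simp
  have hPeq : P = Polynomial.X ^ n - Polynomial.C w := by
    ext j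
    rcases lt_trichotomy j n with hj | hj | hj
    · rcases Nat.eq_zero_or_pos j with hj0 | hj0
      · subst hj0
        rw [hPprod, Multiset.prod_X_sub_C_coeff s (by omega), hcard]
        simp only [Polynomial.coeff_sub, Polynomial.coeff_X_pow, Polynomial.coeff_C,
          if_true, Nat.sub_zero]
        rw [if_neg (by omega : ¬ (0:ℕ) = n), hw, pow_succ]
        ring
      · rw [hPprod, Multiset.prod_X_sub_C_coeff s (by omega), hcard]
        rw [hesymm (n - j) (Finset.mem_Icc.mpr ⟨by omega, by omega⟩), mul_zero]
        simp only [Polynomial.coeff_sub, Polynomial.coeff_X_pow, Polynomial.coeff_C]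
        rw [if_neg (by omega), if_neg (by omega)]
        ring
    · rw [hj, ← hdeg, hmonic.coeff_natDegree, hdeg]
      simp only [Polynomial.coeff_sub, Polynomial.coeff_X_pow, Polynomial.coeff_C, if_true]
      rw [if_neg (by omega : ¬ n = 0)]
      ring
    · rw [Polynomial.coeff_eq_zero_of_natDegree_lt (by omega : P.natDegree < j)]
      simp only [Polynomial.coeff_sub, Polynomial.coeff_X_pow, Polynomial.coeff_C]
      rw [if_neg (by omega), if_neg (by omega)]
      ring
  -- evaluation: for all x, ∏ (x - z k) = x^n - w
  have heval : ∀ x : ℂ, ∏ k, (x - z k) = x ^ n - w := by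
    intro x
    have := congrArg (Polynomial.eval x) hPeq
    simpa [hP, Polynomial.eval_prod] using this
  have hroot : ∀ k, z k ^ n = w := by
    intro k
    have := heval (z k)
    rw [Finset.prod_eq_zero (Finset.mem_univ k) (by ring)] at this
    linear_combination -this
  refine ⟨w, ?_, ?_⟩
  · have : w = z ⟨0, hn⟩ ^ n := (hroot ⟨0, hn⟩).symm
    rw [this, norm_pow, hz, one_pow]
  · ext x
    simp only [Set.mem_range, Set.mem_setOf_eq]
    constructor
    · rintro ⟨k, rfl⟩
      exact hroot k
    · intro hx
      have : ∏ k, (x - z k) = 0 := by rw [heval, hx, sub_self]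
      obtain ⟨k, -, hk⟩ := Finset.prod_eq_zero_iff.mp this
      exact ⟨k, (sub_eq_zero.mp hk).symm⟩
end

section
/- Let q be a prime power. Then there exists a perfect difference set of order q: integers a_1, ..., a_{q+1} such that the q² + q differences a_i − a_j for i ≠ j represent each nonzero residue class modulo q² + q + 1 exactly once. -/
open Module Polynomial

noncomputable def mulLE (F K : Type) [Field F] [Field K] [Algebra F K]
    (θ : K) (h : θ ≠ 0) : K ≃ₗ[F] K :=
  LinearEquiv.ofBijective (LinearMap.mulLeft F θ)
    ⟨mul_right_injective₀ h, fun y => ⟨θ⁻¹ * y, by show θ * (θ⁻¹ * y) = y; exact mul_inv_cancel_left₀ h y⟩⟩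

@[simp] lemma mulLE_apply (F K : Type) [Field F] [Field K] [Algebra F K]
    (θ : K) (h : θ ≠ 0) (x : K) : mulLE F K θ h x = θ * x := rfl

lemma map_mulLE (F K : Type) [Field F] [Field K] [Algebra F K]
    (θ : K) (h : θ ≠ 0) (W : Submodule F K) :
    W.map (mulLE F K θ h : K →ₗ[F] K) = W.map (LinearMap.mulLeft F θ) := rfl

lemma aux_inf (F K : Type) [Field F] [Field K] [Algebra F K] [FiniteDimensional F K]
    (h3 : Module.finrank F K = 3) (W : Submodule F K) (hW : Module.finrank F ↥W = 2)
    (θ : K) (hθ0 : θ ≠ 0) (hθ : θ ∉ Set.range (algebraMap F K)) :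
    Module.finrank F ↥(W ⊓ W.map (LinearMap.mulLeft F θ)) = 1 := by
  set W' := W.map (LinearMap.mulLeft F θ) with hW'def
  have hW' : Module.finrank F ↥W' = 2 := by
    have : W' = W.map (mulLE F K θ hθ0 : K →ₗ[F] K) := rfl
    rw [this, LinearEquiv.finrank_map_eq]; exact hW
  have hsup : Module.finrank F ↥(W ⊔ W') ≤ 3 := h3 ▸ Submodule.finrank_le _
  have hkey := Submodule.finrank_sup_add_finrank_inf_eq W W'
  rw [hW, hW'] at hkey
  -- so finrank inf ≥ 1
  have h1 : 1 ≤ Module.finrank F ↥(W ⊓ W') := by omega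
  -- suppose ≥ 2 : then W = W'
  by_contra hne
  have h2 : 2 ≤ Module.finrank F ↥(W ⊓ W') := by omega
  have hinfW : W ⊓ W' = W := Submodule.eq_of_le_of_finrank_le inf_le_left (by omega)
  have hWle : W ≤ W' := by rw [← hinfW]; exact inf_le_right
  have hWeq : W = W' := (Submodule.eq_of_le_of_finrank_le hWle (by omega)).symm ▸ rfl
  -- pick w ∈ W nonzero
  have hWnt : ∃ w : K, w ∈ W ∧ w ≠ 0 := by
    by_contra hc
    push_neg at hc
    have : W = ⊥ := by
      ext x; simp only [Submodule.mem_bot]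
      exact ⟨fun hx => by by_contra h0; exact h0 (hc x hx), fun hx => hx ▸ W.zero_mem⟩
    rw [this, finrank_bot] at hW; omega
  obtain ⟨w, hwW, hw0⟩ := hWnt
  have hstab : ∀ x ∈ W, θ * x ∈ W := by
    intro x hx
    rw [hWeq]; exact ⟨x, hx, rfl⟩
  -- family w, θw, θ²w in W is dependent
  set v : Fin 3 → K := ![w, θ * w, θ * (θ * w)] with hv
  have hvW : ∀ i, v i ∈ W := by
    intro i; fin_cases i
    · exact hwW
    · exact hstab _ hwW
    · exact hstab _ (hstab _ hwW)
  have hdep : ¬ LinearIndependent F v := by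
    intro hind
    have hindW : LinearIndependent F (fun i => (⟨v i, hvW i⟩ : ↥W)) := by
      apply LinearIndependent.of_comp W.subtype
      exact hind
    have := hindW.fintype_card_le_finrank
    rw [hW] at this
    simp at this
  rw [Fintype.not_linearIndependent_iff] at hdep
  obtain ⟨c, hsum, i, hi⟩ := hdep
  -- polynomial
  set P : Polynomial F := C (c 0) + C (c 1) * X + C (c 2) * X ^ 2 with hP
  have hPne : P ≠ 0 := by
    intro h0
    have h00 : P.coeff 0 = c 0 := by simp [hP, coeff_add, coeff_C]
    have h11 : P.coeff 1 = c 1 := by simp [hP, coeff_add, coeff_C]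
    have h22 : P.coeff 2 = c 2 := by simp [hP, coeff_add, coeff_C]
    fin_cases i
    · rw [h0] at h00; simp at h00; exact hi h00.symm
    · rw [h0] at h11; simp at h11; exact hi h11.symm
    · rw [h0] at h22; simp at h22; exact hi h22.symm
  have haev : aeval θ P = 0 := by
    have hsum' : (c 0 • (1:K) + c 1 • θ + c 2 • θ ^ 2) * w = 0 := by
      have : ∑ i : Fin 3, c i • v i = c 0 • w + c 1 • (θ * w) + c 2 • (θ * (θ * w)) := by
        simp [hv, Fin.sum_univ_three]
      rw [this] at hsum
      rw [← hsum]
      simp only [Algebra.smul_def]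
      ring
    have hfac : (c 0 • (1:K) + c 1 • θ + c 2 • θ ^ 2) = 0 := by
      rcases mul_eq_zero.mp hsum' with h | h
      · exact h
      · exact absurd h hw0
    rw [hP]
    simp only [map_add, map_mul, map_pow, aeval_C, aeval_X]
    rw [← hfac]
    simp only [Algebra.smul_def]
    ring
  have hint : IsIntegral F θ := IsIntegral.of_finite F θ
  have hdeg : (minpoly F θ).natDegree ≤ 2 := by
    have := minpoly.degree_le_of_ne_zero F θ hPne haev
    have hPd : P.degree ≤ 2 := by
      rw [hP]; compute_degree
    exact natDegree_le_iff_degree_le.mpr (le_trans this hPd)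
  -- tower argument
  have hLrank : Module.finrank F ↥(IntermediateField.adjoin F {θ}) = (minpoly F θ).natDegree :=
    IntermediateField.adjoin.finrank hint
  have htower : Module.finrank F ↥(IntermediateField.adjoin F {θ}) *
      Module.finrank (↥(IntermediateField.adjoin F {θ})) K = 3 := by
    rw [Module.finrank_mul_finrank]; exact h3
  have hpos : 0 < (minpoly F θ).natDegree := minpoly.natDegree_pos hint
  have hd1 : (minpoly F θ).natDegree = 1 := by
    have h := htower; rw [hLrank] at h
    interval_cases hdd : (minpoly F θ).natDegree
    · rfl
    · omega
  have hbot : IntermediateField.adjoin F {θ} = ⊥ :=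
    IntermediateField.finrank_eq_one_iff.mp (hLrank.trans hd1)
  have : θ ∈ (⊥ : IntermediateField F K) := by
    rw [← hbot]; exact IntermediateField.mem_adjoin_simple_self F θ
  rw [IntermediateField.mem_bot] at this
  exact hθ this

open Finset

set_option maxHeartbeats 1000000 in
set_option synthInstance.maxHeartbeats 400000 in
/-- Singer's theorem: existence of perfect difference sets of prime power order. -/
theorem singer_perfect_difference_set (q : ℕ) (hq : IsPrimePow q) :
    ∃ a : Fin (q + 1) → ℤ,
      ∀ c : ZMod (q ^ 2 + q + 1), c ≠ 0 →
        ∃! p : Fin (q + 1) × Fin (q + 1),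
          p.1 ≠ p.2 ∧ ((a p.1 - a p.2 : ℤ) : ZMod (q ^ 2 + q + 1)) = c := by
  classical
  obtain ⟨p, k, hp, hk, hqpk⟩ := hq
  haveI hpf : Fact p.Prime := ⟨hp.nat_prime⟩
  have hq2 : 2 ≤ q := by
    calc 2 ≤ p := hp.nat_prime.two_le
    _ ≤ p ^ k := Nat.le_self_pow hk.ne' p
    _ = q := hqpk
  set n := q ^ 2 + q + 1 with hn
  haveI : NeZero n := ⟨by omega⟩
  set N := q ^ 3 - 1 with hN
  have hNn : N = n * (q - 1) := by
    obtain ⟨m, rfl⟩ : ∃ m, q = m + 2 := ⟨q - 2, by omega⟩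
    have h1 : (m + 2) ^ 3 = ((m+2) ^ 2 + (m+2) + 1) * (m + 1) + 1 := by ring
    simp only [hN, hn, h1, Nat.add_sub_cancel]
    have h2 : m + 2 - 1 = m + 1 := by omega
    rw [h2]
  have hq1 : 0 < q - 1 := by omega
  -- the field K
  set K := GaloisField p (3 * k) with hK
  haveI : Fintype K := Fintype.ofFinite K
  have cardK : Fintype.card K = q ^ 3 := by
    have h := GaloisField.card p (3 * k) (by positivity)
    rw [Nat.card_eq_fintype_card] at h
    have : Fintype.card K = p ^ (3 * k) := h
    rw [this, ← hqpk, ← pow_mul, mul_comm 3 k]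
  -- generator of units
  obtain ⟨g, hg⟩ := IsCyclic.exists_generator (α := Kˣ)
  have horder : orderOf g = N := by
    rw [orderOf_eq_card_of_forall_mem_zpowers hg, Nat.card_eq_fintype_card,
      Fintype.card_units, cardK]
  have hNpos : 0 < N := by
    have : 8 ≤ q ^ 3 := by
      calc (8:ℕ) = 2 ^ 3 := by norm_num
      _ ≤ q ^ 3 := Nat.pow_le_pow_left hq2 3
    omega
  have hindex : ∀ x : Kˣ, ∃ m : ℕ, g ^ m = x := by
    intro x
    exact (Submonoid.mem_powers_iff x g).mp (mem_powers_iff_mem_zpowers.mpr (hg x))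
  choose ind gind using hindex
  set φ : Kˣ → ZMod n := fun x => (ind x : ZMod n) with hφ
  have hnN : n ∣ N := ⟨q - 1, hNn⟩
  have hcast : ∀ a b : ℕ, g ^ a = g ^ b → (a : ZMod n) = (b : ZMod n) := by
    intro a b h
    rw [ZMod.natCast_eq_natCast_iff]
    exact Nat.ModEq.of_dvd hnN (by rwa [pow_eq_pow_iff_modEq, horder] at h)
  have φmul : ∀ x y : Kˣ, φ (x * y) = φ x + φ y := by
    intro x y
    have : g ^ ind (x * y) = g ^ (ind x + ind y) := by
      rw [pow_add, gind, gind, gind]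
    have := hcast _ _ this
    push_cast at this
    exact this
  have φzero : ∀ x : Kˣ, φ x = 0 ↔ x ^ (q - 1) = 1 := by
    intro x
    have h1 : x ^ (q - 1) = g ^ (ind x * (q - 1)) := by rw [pow_mul, gind]
    constructor
    · intro h
      obtain ⟨m, hm⟩ := (ZMod.natCast_eq_zero_iff _ _).mp h
      rw [h1, hm]
      rw [show n * m * (q - 1) = N * m from by rw [hNn]; ring, pow_mul, ← horder,
        pow_orderOf_eq_one, one_pow]
    · intro h
      have : g ^ (ind x * (q - 1)) = g ^ 0 := by rw [pow_zero, ← h1, h]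
      have hmod := (pow_eq_pow_iff_modEq.mp this)
      rw [horder, Nat.modEq_zero_iff_dvd, hNn] at hmod
      have : n ∣ ind x := by
        have := (Nat.mul_dvd_mul_iff_right hq1).mp hmod
        exact this
      exact (ZMod.natCast_eq_zero_iff _ _).mpr this
  have φgpow : ∀ m : ℕ, φ (g ^ m) = (m : ZMod n) := by
    intro m
    exact hcast _ _ (by rw [gind])
  have φone : φ 1 = 0 := (φzero 1).mpr (one_pow _)
  have φinv : ∀ x : Kˣ, φ x⁻¹ = - φ x := by
    intro x
    have := φmul x x⁻¹
    rw [mul_inv_cancel, φone] at this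
    linear_combination -this
  have φdiv : ∀ x y : Kˣ, φ (x * y⁻¹) = φ x - φ y := by
    intro x y
    rw [φmul, φinv]; ring
  -- the subfield F of q elements
  have hqpk' : q = p ^ k := hqpk.symm
  set Fr : K →+* K := iterateFrobenius K p k with hFr
  have hFrdef : ∀ x : K, Fr x = x ^ q := by
    intro x
    rw [hFr, iterateFrobenius_def, hqpk]
  set F : Subfield K := { carrier := {x : K | Fr x = x}
                          mul_mem' := by
                            intro a b ha hb
                            simp only [Set.mem_setOf_eq, map_mul] at *
                            rw [ha, hb]
                          one_mem' := by simp only [Set.mem_setOf_eq, map_one]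
                          add_mem' := by
                            intro a b ha hb
                            simp only [Set.mem_setOf_eq, map_add] at *
                            rw [ha, hb]
                          zero_mem' := by simp only [Set.mem_setOf_eq, map_zero]
                          neg_mem' := by
                            intro a ha
                            simp only [Set.mem_setOf_eq, map_neg] at *
                            rw [ha]
                          inv_mem' := by
                            intro a ha
                            simp only [Set.mem_setOf_eq, map_inv₀] at *
                            rw [ha] } with hF
  have hFmem : ∀ x : K, x ∈ F ↔ x ^ q = x := by
    intro x
    rw [hF]
    constructor
    · intro h; rw [← hFrdef]; exact h
    · intro h; show Fr x = x; rw [hFrdef]; exact h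
  -- units in F
  have hFiff : ∀ x : Kˣ, ((x : K) ∈ F ↔ x ^ (q - 1) = 1) := by
    intro x
    rw [hFmem]
    have hcoe : ((x : K)) ^ q = ((x ^ q : Kˣ) : K) := by push_cast; ring
    constructor
    · intro h
      have hx : x ^ q = x := by
        apply Units.ext
        rw [← hcoe]; exact h
      have : x ^ (q - 1) * x = 1 * x := by
        rw [one_mul, ← pow_succ]
        rw [show q - 1 + 1 = q from by omega]
        exact hx
      exact mul_right_cancel this
    · intro h
      have : x ^ q = x := by
        rw [show q = q - 1 + 1 from by omega, pow_succ, h, one_mul]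
      rw [hcoe, this]
  have hφF : ∀ x : Kˣ, ((x : K) ∈ F ↔ φ x = 0) := by
    intro x
    rw [hFiff, φzero]
  -- the finset of (q-1)-th roots of unity
  set T : Finset Kˣ := univ.filter (fun u : Kˣ => u ^ (q - 1) = 1) with hT
  have hTmem : ∀ u : Kˣ, u ∈ T ↔ u ^ (q - 1) = 1 := by
    intro u
    rw [hT]
    rw [mem_filter]
    simp
  have hTcard : T.card = q - 1 := by
    apply le_antisymm
    · rw [hT]; exact IsCyclic.card_pow_eq_one_le hq1
    · have hmaps : ∀ j : Fin (q - 1), g ^ (n * (j : ℕ)) ∈ T := by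
        intro j
        rw [hTmem, ← pow_mul]
        rw [show n * (j : ℕ) * (q - 1) = N * (j : ℕ) from by rw [hNn]; ring,
          pow_mul, ← horder, pow_orderOf_eq_one, one_pow]
      have hinj : Set.InjOn (fun j : Fin (q - 1) => g ^ (n * (j : ℕ))) ↑(univ : Finset (Fin (q - 1))) := by
        intro i _ j _ hij
        have hi : n * (i : ℕ) < orderOf g := by
          rw [horder, hNn]
          exact mul_lt_mul_of_pos_left i.2 (by omega)
        have hj : n * (j : ℕ) < orderOf g := by
          rw [horder, hNn]
          exact mul_lt_mul_of_pos_left j.2 (by omega)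
        have := pow_injOn_Iio_orderOf hi hj hij
        have : (i : ℕ) = (j : ℕ) := by
          have hn0 : 0 < n := by omega
          exact Nat.eq_of_mul_eq_mul_left hn0 this
        exact Fin.ext this
      have := Finset.card_le_card_of_injOn _ (fun j _ => hmaps j) hinj
      simpa using this
  -- cardinality of F
  have hcardF : Fintype.card ↥F = q := by
    set FinsetF : Finset K := insert (0 : K) (T.image Units.val) with hFF
    have hmem : ∀ x : K, x ∈ FinsetF ↔ x ∈ F := by
      intro x
      rw [hFF]
      rw [mem_insert, mem_image]
      constructor
      · rintro (rfl | ⟨u, hu, rfl⟩)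
        · rw [hFmem]
          exact zero_pow (by omega)
        · exact (hFiff u).mpr ((hTmem u).mp hu)
      · intro hx
        by_cases h0 : x = 0
        · left; exact h0
        · right
          exact ⟨Units.mk0 x h0, (hTmem _).mpr ((hFiff (Units.mk0 x h0)).mp hx), rfl⟩
    have h1 : Fintype.card {x : K // x ∈ F} = FinsetF.card := Fintype.card_of_subtype FinsetF hmem
    have h2 : FinsetF.card = q := by
      rw [hFF]
      rw [Finset.card_insert_of_notMem, Finset.card_image_of_injective T Units.val_injective, hTcard]
      · omega
      · intro hc
        rw [mem_image] at hc
        obtain ⟨u, _, hu⟩ := hc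
        exact u.ne_zero hu
    rw [← h2]
    exact h1
  -- dimension 3
  haveI : FiniteDimensional ↥F K := inferInstance
  have hfin3 : Module.finrank ↥F K = 3 := by
    have h := card_eq_pow_finrank (K := ↥F) (V := K)
    rw [hcardF, cardK] at h
    exact (Nat.pow_right_injective hq2 h.symm)
  -- the plane W
  have b0 := Module.finBasis ↥F K
  rw [hfin3] at b0
  set bv : Fin 2 → K := fun j => b0 ⟨(j : ℕ), by omega⟩ with hbv
  have hbvli : LinearIndependent ↥F bv := by
    apply b0.linearIndependent.comp
    intro i j hij
    simp only [Fin.mk.injEq] at hij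
    exact Fin.ext hij
  set W : Submodule ↥F K := Submodule.span ↥F (Set.range bv) with hW
  have hWrank : Module.finrank ↥F ↥W = 2 := by
    rw [hW, finrank_span_eq_card hbvli]
    simp
  have hWcard : Fintype.card ↥W = q ^ 2 := by
    have h := card_eq_pow_finrank (K := ↥F) (V := ↥W)
    rw [hcardF, hWrank] at h
    exact h
  have hsmulW : ∀ (u : Kˣ) (x : K), (u : K) ∈ F → x ∈ W → (u : K) * x ∈ W := by
    intro u x hu hx
    have := W.smul_mem (⟨(u : K), hu⟩ : ↥F) hx
    rwa [Subring.smul_def] at this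
  -- the finset of units in W
  set WF : Finset Kˣ := univ.filter (fun x : Kˣ => (x : K) ∈ W) with hWF
  have hWFmem : ∀ x : Kˣ, x ∈ WF ↔ (x : K) ∈ W := by
    intro x
    rw [hWF]
    rw [mem_filter]
    simp
  have hWFcard : WF.card = q ^ 2 - 1 := by
    set FinsetW : Finset K := insert (0 : K) (WF.image Units.val) with hFW
    have hmem : ∀ x : K, x ∈ FinsetW ↔ x ∈ W := by
      intro x
      rw [hFW]
      rw [mem_insert, mem_image]
      constructor
      · rintro (rfl | ⟨u, hu, rfl⟩)
        · exact W.zero_mem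
        · exact (hWFmem u).mp hu
      · intro hx
        by_cases h0 : x = 0
        · left; exact h0
        · right
          exact ⟨Units.mk0 x h0, (hWFmem _).mpr hx, rfl⟩
    have h1 : Fintype.card {x : K // x ∈ W} = FinsetW.card := Fintype.card_of_subtype FinsetW hmem
    have h2 : FinsetW.card = WF.card + 1 := by
      rw [hFW]
      rw [Finset.card_insert_of_notMem, Finset.card_image_of_injective WF Units.val_injective]
      intro hc
      rw [mem_image] at hc
      obtain ⟨u, _, hu⟩ := hc
      exact u.ne_zero hu
    have : Fintype.card {x : K // x ∈ W} = Fintype.card ↥W := rfl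
    omega
  -- the difference set A
  set A : Finset (ZMod n) := WF.image φ with hA
  have hfiber : ∀ α ∈ A, (WF.filter (fun x => φ x = α)).card = q - 1 := by
    intro α hα
    rw [hA, mem_image] at hα
    obtain ⟨x₀, hx₀, rfl⟩ := hα
    have hset : WF.filter (fun x => φ x = φ x₀) = T.image (fun u => u * x₀) := by
      ext y
      rw [mem_filter, mem_image]
      constructor
      · rintro ⟨hyW, hyφ⟩
        refine ⟨y * x₀⁻¹, ?_, by group⟩
        rw [hTmem, ← φzero, φdiv, hyφ, sub_self]
      · rintro ⟨u, hu, rfl⟩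
        have hu0 : φ u = 0 := (φzero u).mpr ((hTmem u).mp hu)
        constructor
        · rw [hWFmem]
          push_cast
          exact hsmulW u _ ((hFiff u).mpr ((hTmem u).mp hu)) ((hWFmem x₀).mp hx₀)
        · rw [φmul, hu0, zero_add]
    rw [hset, Finset.card_image_of_injective T (mul_left_injective x₀), hTcard]
  have hAcard : A.card = q + 1 := by
    have h1 : WF.card = A.card * (q - 1) := by
      rw [Finset.card_eq_sum_card_fiberwise (f := φ) (t := A)
        (fun x hx => by rw [hA]; exact mem_image_of_mem φ hx)]
      rw [Finset.sum_congr rfl hfiber, Finset.sum_const, smul_eq_mul]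
    have h2 : (q + 1) * (q - 1) = q ^ 2 - 1 := by
      obtain ⟨m, rfl⟩ : ∃ m, q = m + 2 := ⟨q - 2, by omega⟩
      have h4 : m + 2 - 1 = m + 1 := by omega
      rw [h4]
      have h3 : (m + 2) ^ 2 = (m + 2 + 1) * (m + 1) + 1 := by ring
      omega
    rw [hWFcard, ← h2] at h1
    have := Nat.eq_of_mul_eq_mul_right hq1 h1.symm
    omega
  -- range of algebraMap
  have hrange : Set.range (algebraMap ↥F K) = (F : Set K) := by
    ext x
    constructor
    · rintro ⟨y, rfl⟩; exact y.2
    · intro hx; exact ⟨⟨x, hx⟩, rfl⟩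
  -- enumeration of A
  set e : Fin (q + 1) ≃ {x // x ∈ A} := (finCongr hAcard.symm).trans A.equivFin.symm with he
  have hvalcast : ∀ z : ZMod n, (((z.val : ℕ)) : ZMod n) = z := by
    intro z
    rw [ZMod.natCast_val, ZMod.cast_id]
  refine ⟨fun i => (((e i : ZMod n)).val : ℤ), ?_⟩
  intro c hc
  -- θ := g ^ c.val
  set θ : Kˣ := g ^ (ZMod.val c) with hθdef
  have hφθ : φ θ = c := by rw [hθdef, φgpow, ZMod.natCast_val, ZMod.cast_id]
  have hθF : (θ : K) ∉ F := by
    intro hmem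
    apply hc
    rw [← hφθ]
    exact (hφF θ).mp hmem
  have hθ0 : (θ : K) ≠ 0 := θ.ne_zero
  have hθrange : (θ : K) ∉ Set.range (algebraMap ↥F K) := by rwa [hrange]
  have hinf := aux_inf ↥F K hfin3 W hWrank (θ : K) hθ0 hθrange
  set W' := W.map (LinearMap.mulLeft ↥F (θ : K)) with hW'def
  obtain ⟨v, hv0, hvgen⟩ := finrank_eq_one_iff'.mp hinf
  have hvW : (v : K) ∈ W := v.2.1
  have hvW' : (v : K) ∈ W' := v.2.2
  obtain ⟨u, huW, huv⟩ := Submodule.mem_map.mp hvW'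
  have huv' : (θ : K) * u = (v : K) := huv
  have hv0' : (v : K) ≠ 0 := fun h => hv0 (Subtype.ext h)
  have hu0 : u ≠ 0 := by
    rintro rfl
    rw [mul_zero] at huv'
    exact hv0' huv'.symm
  set vu : Kˣ := Units.mk0 (v : K) hv0' with hvu
  set uu : Kˣ := Units.mk0 u hu0 with huu
  have hvuu : vu = θ * uu := Units.ext (by
    rw [hvu]
    simp only [Units.val_mk0, Units.val_mul, huu]
    exact huv'.symm)
  have hαA : φ vu ∈ A := by rw [hA]; exact mem_image_of_mem φ ((hWFmem vu).mpr hvW)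
  have hβA : φ uu ∈ A := by rw [hA]; exact mem_image_of_mem φ ((hWFmem uu).mpr huW)
  have hαβ : φ vu - φ uu = c := by rw [hvuu, φmul, hφθ]; ring
  -- key uniqueness property
  have hkey : ∀ x y : Kˣ, x ∈ WF → y ∈ WF → φ x - φ y = c → φ x = φ vu := by
    intro x y hx hy hxy
    set lam : Kˣ := x * y⁻¹ * θ⁻¹ with hlam
    have hl0 : φ lam = 0 := by
      rw [hlam, φmul, φdiv, φinv, hφθ, hxy]
      ring
    have hlamF : (lam : K) ∈ F := (hφF lam).mpr hl0
    have hxeq : x = lam * θ * y := by rw [hlam]; group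
    have hxW' : (x : K) ∈ W' := by
      rw [hW'def]
      apply Submodule.mem_map.mpr
      refine ⟨(lam : K) * (y : K), hsmulW lam _ hlamF ((hWFmem y).mp hy), ?_⟩
      show (θ : K) * ((lam : K) * (y : K)) = (x : K)
      rw [hxeq]
      push_cast
      ring
    obtain ⟨d, hd⟩ := hvgen ⟨(x : K), (hWFmem x).mp hx, hxW'⟩
    have hdv : (d : K) * (v : K) = (x : K) := by
      have h := congrArg (Subtype.val) hd
      simpa [Subring.smul_def, Subfield.smul_def, smul_eq_mul] using h
    have hd0 : (d : K) ≠ 0 := by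
      intro h
      rw [h, zero_mul] at hdv
      exact x.ne_zero hdv.symm
    set du : Kˣ := Units.mk0 (d : K) hd0 with hdu
    have hxdu : x = du * vu := Units.ext (by rw [hdu, hvu]; push_cast; exact hdv.symm)
    have hduF : (du : K) ∈ F := d.2
    rw [hxdu, φmul, (hφF du).mp hduF, zero_add]
  -- assemble
  refine ⟨(e.symm ⟨φ vu, hαA⟩, e.symm ⟨φ uu, hβA⟩), ⟨?_, ?_⟩, ?_⟩
  · intro hij
    apply hc
    have h1 : (⟨φ vu, hαA⟩ : {x // x ∈ A}) = ⟨φ uu, hβA⟩ := e.symm.injective hij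
    have h2 : φ vu = φ uu := congrArg Subtype.val h1
    rw [← hαβ, h2, sub_self]
  · show ((((((e (e.symm ⟨φ vu, hαA⟩)) : ZMod n)).val : ℤ) - ((((e (e.symm ⟨φ uu, hβA⟩)) : ZMod n)).val : ℤ) : ℤ) : ZMod n) = c
    rw [e.apply_symm_apply, e.apply_symm_apply]
    push_cast
    rw [hvalcast, hvalcast]
    exact hαβ
  · rintro ⟨i, j⟩ ⟨hne, hcasteq⟩
    have hij : ((e i : ZMod n)) - ((e j : ZMod n)) = c := by
      rw [← hcasteq]
      push_cast
      rw [hvalcast, hvalcast]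
    obtain ⟨x, hx, hφx⟩ := mem_image.mp (by rw [← hA]; exact (e i).2)
    obtain ⟨y, hy, hφy⟩ := mem_image.mp (by rw [← hA]; exact (e j).2)
    have hα' : φ x = φ vu := hkey x y hx hy (by rw [hφx, hφy]; exact hij)
    have h1 : ((e i : ZMod n)) = φ vu := by rw [← hφx]; exact hα'
    have h3 : φ vu - ((e j : ZMod n)) = c := by rw [← h1]; exact hij
    have h2 : ((e j : ZMod n)) = φ uu := by linear_combination hαβ - h3
    have hieq : i = e.symm ⟨φ vu, hαA⟩ := by
      apply e.injective
      rw [e.apply_symm_apply]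
      exact Subtype.ext h1
    have hjeq : j = e.symm ⟨φ uu, hβA⟩ := by
      apply e.injective
      rw [e.apply_symm_apply]
      exact Subtype.ext h2
    exact Prod.ext hieq hjeq
end

section
/- Let (a_1, ..., a_n) be a perfect difference set of order n−1 modulo N = n²−n+1, let α be a complex number with |α| = 1, and set z_k = α·e^{2πi a_k/N}. Then |∑_{k=1}^n z_k^ν| = √(n−1) for every ν = 1, ..., n²−n. -/
open Finset Complex Real

theorem fabrykowski_construction (n : ℕ) (hn : 2 ≤ n) (a : Fin n → ℤ)
    (ha : ∀ c : ZMod (n ^ 2 - n + 1), c ≠ 0 →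
      ∃! p : Fin n × Fin n,
        p.1 ≠ p.2 ∧ ((a p.1 - a p.2 : ℤ) : ZMod (n ^ 2 - n + 1)) = c)
    (α : ℂ) (hα : ‖α‖ = 1) (z : Fin n → ℂ)
    (hzdef : ∀ k, z k = α * Complex.exp (2 * Real.pi * Complex.I * (a k : ℝ) / (n ^ 2 - n + 1 : ℝ))) :
    ∀ ν ∈ Finset.Icc 1 (n ^ 2 - n),
      ‖∑ k, z k ^ ν‖ = Real.sqrt ((n : ℝ) - 1) := by
  intro ν hν
  obtain ⟨hν1, hν2⟩ := Finset.mem_Icc.mp hν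
  have hnn : n ≤ n ^ 2 := Nat.le_self_pow two_ne_zero n
  have hNN : 2 + n ≤ n ^ 2 := by nlinarith
  set N : ℕ := n ^ 2 - n + 1 with hNdef
  have hN3 : 3 ≤ N := by omega
  haveI : NeZero N := ⟨by omega⟩
  have hNR : (N : ℝ) = (n : ℝ) ^ 2 - n + 1 := by
    have : (N : ℝ) = ((n ^ 2 - n : ℕ) : ℝ) + 1 := by exact_mod_cast rfl
    rw [this, Nat.cast_sub hnn]; push_cast; ring
  have hνN : ν < N := by omega
  have hcardN : N - 1 = n * n - n := by
    have : n ^ 2 = n * n := sq n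
    omega
  clear_value N
  clear hNdef hNN hν hν2
  have hNC : (N : ℂ) ≠ 0 := Nat.cast_ne_zero.mpr (by omega)
  -- the basic exponential
  set e : ℤ → ℂ := fun m => Complex.exp (2 * Real.pi * Complex.I * m / N) with he
  have e_add : ∀ m₁ m₂ : ℤ, e (m₁ + m₂) = e m₁ * e m₂ := by
    intro m₁ m₂
    rw [he]
    simp only
    rw [← Complex.exp_add]
    congr 1
    push_cast
    ring
  have e_zero : e 0 = 1 := by simp [he]
  have e_dvd : ∀ m : ℤ, (N : ℤ) ∣ m → e m = 1 := by
    intro m ⟨t, ht⟩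
    rw [he]
    simp only [ht]
    rw [show 2 * (Real.pi : ℂ) * Complex.I * ((N : ℤ) * t : ℤ) / N
        = t * (2 * Real.pi * Complex.I) by
      push_cast
      field_simp]
    exact Complex.exp_int_mul_two_pi_mul_I t
  have e_congr : ∀ m₁ m₂ : ℤ, ((m₁ : ZMod N) = (m₂ : ZMod N)) → e m₁ = e m₂ := by
    intro m₁ m₂ h
    have hdvd : (N : ℤ) ∣ m₁ - m₂ := by
      rwa [← ZMod.intCast_zmod_eq_zero_iff_dvd, Int.cast_sub, sub_eq_zero]
    have h2 : e m₁ = e (m₂ + (m₁ - m₂)) := by ring_nf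
    rw [h2, e_add, e_dvd _ hdvd, mul_one]
  have e_conj : ∀ m : ℤ, (starRingEnd ℂ) (e m) = e (-m) := by
    intro m
    rw [he]
    simp only
    rw [← Complex.exp_conj]
    congr 1
    simp only [map_div₀, map_mul, Complex.conj_I, map_ofNat, Complex.conj_ofReal,
      map_intCast, map_natCast]
    push_cast
    ring
  have e_pow : ∀ (m : ℤ) (k : ℕ), e m ^ k = e (k * m) := by
    intro m k
    rw [he]
    simp only
    rw [← Complex.exp_nat_mul]
    congr 1
    push_cast
    ring
  -- z in terms of e
  have hz : ∀ k, z k = α * e (a k) := by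
    intro k
    rw [hzdef k, he]
    simp only
    congr 2
    rw [show ((((n : ℝ) ^ 2 - n + 1 : ℝ)) : ℂ) = ((N : ℝ) : ℂ) by rw [hNR]]
    push_cast
    ring
  have hαconj : α * (starRingEnd ℂ) α = 1 := by
    rw [Complex.mul_conj, ← Complex.sq_norm, hα]
    norm_num
  -- the term computation
  have hterm : ∀ j k : Fin n, z j ^ ν * (starRingEnd ℂ) (z k ^ ν)
      = e ((ν : ℤ) * (a j - a k)) := by
    intro j k
    rw [hz j, hz k, mul_pow, mul_pow, map_mul, map_pow, map_pow, e_conj, e_pow, e_pow]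
    have h3 : α ^ ν * e ((ν : ℤ) * a j) * ((starRingEnd ℂ) α ^ ν * e ((ν : ℤ) * (-a k)))
        = (α * (starRingEnd ℂ) α) ^ ν * (e ((ν : ℤ) * a j) * e ((ν : ℤ) * (-a k))) := by
      ring
    rw [h3, hαconj, one_pow, ← e_add]
    congr 1
    ring
  -- e composed via ZMod values
  have e_val : ∀ m : ℤ, e ((ν : ℤ) * m) = e ((ν : ℤ) * ((m : ZMod N).val : ℤ)) := by
    intro m
    apply e_congr
    push_cast
    congr 1
    rw [ZMod.natCast_val, ZMod.cast_id]
  -- sum over all of ZMod N is zero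
  have hζ1 : e (ν : ℤ) ≠ 1 := by
    intro h
    rw [he] at h
    simp only at h
    rw [Complex.exp_eq_one_iff] at h
    obtain ⟨t, ht⟩ := h
    rw [div_eq_iff hNC] at ht
    have h2 : ((ν : ℤ) : ℂ) * (2 * Real.pi * Complex.I) = ((t * N : ℤ) : ℂ) * (2 * Real.pi * Complex.I) := by
      push_cast
      push_cast at ht
      linear_combination ht
    have h4 : (2 * (Real.pi : ℂ) * Complex.I) ≠ 0 := by
      simp [Real.pi_ne_zero, Complex.I_ne_zero, Complex.ofReal_ne_zero]
    have h5 : ((ν : ℤ) : ℂ) = ((t * N : ℤ) : ℂ) := mul_right_cancel₀ h4 h2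
    have h6 : (ν : ℤ) = t * N := by exact_mod_cast h5
    have : (N : ℤ) ∣ (ν : ℤ) := ⟨t, by linarith⟩
    have : N ∣ ν := by exact_mod_cast this
    have := Nat.le_of_dvd (by omega) this
    omega
  have hζN : e (ν : ℤ) ^ N = 1 := by
    rw [e_pow]
    exact e_dvd _ ⟨ν, by ring⟩
  have hsum0 : ∑ c : ZMod N, e ((ν : ℤ) * (c.val : ℤ)) = 0 := by
    have h1 : ∀ c : ZMod N, e ((ν : ℤ) * (c.val : ℤ)) = e (ν : ℤ) ^ c.val := by
      intro c
      rw [e_pow]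
      congr 1
      ring
    simp only [h1]
    rw [Finset.sum_bij (fun (c : ZMod N) (_ : c ∈ Finset.univ) => c.val)
      (fun c _ => Finset.mem_range.mpr (ZMod.val_lt c))
      (fun c _ c' _ h => ZMod.val_injective N h)
      (fun j hj => ⟨(j : ZMod N), Finset.mem_univ _,
        ZMod.val_natCast_of_lt (Finset.mem_range.mp hj)⟩)
      (fun c _ => rfl)]
    rw [geom_sum_eq hζ1, hζN]
    simp
  -- the off-diagonal bijection
  have hι : ∀ i : Fin n, (⟨0, by omega⟩ : Fin n) = i ∨ True := fun _ => Or.inr trivial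
  -- witness function
  let w : ZMod N → Fin n × Fin n := fun c =>
    if h : c ≠ 0 then (ha c h).exists.choose else (⟨0, by omega⟩, ⟨0, by omega⟩)
  have hw : ∀ c : ZMod N, c ≠ 0 → ((w c).1 ≠ (w c).2 ∧
      ((a (w c).1 - a (w c).2 : ℤ) : ZMod N) = c) := by
    intro c hc
    simp only [w, dif_pos hc]
    exact (ha c hc).exists.choose_spec
  set t : Finset (Fin n × Fin n) := Finset.univ.filter (fun p => p.1 ≠ p.2) with htdef
  set s : Finset (ZMod N) := Finset.univ.filter (fun c => c ≠ 0) with hsdef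
  have hcards : s.card = N - 1 := by
    rw [hsdef, Finset.filter_ne']
    rw [Finset.card_erase_of_mem (Finset.mem_univ _), Finset.card_univ, ZMod.card]
  have hcardt : t.card = n * n - n := by
    rw [htdef]
    have h1 : (Finset.univ.filter (fun p : Fin n × Fin n => p.1 ≠ p.2)).card
        = Fintype.card (Fin n × Fin n) - (Finset.univ.filter (fun p : Fin n × Fin n => p.1 = p.2)).card := by
      rw [← Finset.card_univ]
      rw [Finset.filter_not]
      exact Finset.card_sdiff_of_subset (Finset.filter_subset _ _)
    have h2 : (Finset.univ.filter (fun p : Fin n × Fin n => p.1 = p.2))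
        = Finset.univ.image (fun i : Fin n => (i, i)) := by
      ext p
      simp only [Finset.mem_filter, Finset.mem_univ, true_and, Finset.mem_image]
      constructor
      · intro h
        exact ⟨p.1, Prod.ext rfl h⟩
      · rintro ⟨i, rfl⟩
        rfl
    have h3 : (Finset.univ.filter (fun p : Fin n × Fin n => p.1 = p.2)).card = n := by
      rw [h2, Finset.card_image_of_injective _ (fun i j hij => (Prod.ext_iff.mp hij).1),
        Finset.card_univ, Fintype.card_fin]
    rw [h1, h3, Fintype.card_prod, Fintype.card_fin]
  have himage : Finset.image w s = t := by
    apply Finset.eq_of_subset_of_card_le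
    · intro p hp
      obtain ⟨c, hc, hcp⟩ := Finset.mem_image.mp hp
      have hc0 : c ≠ 0 := (Finset.mem_filter.mp hc).2
      rw [htdef, Finset.mem_filter]
      exact ⟨Finset.mem_univ _, hcp ▸ (hw c hc0).1⟩
    · rw [hcardt, Finset.card_image_of_injOn, hcards, hcardN]
      intro c hc c' hc' h
      have hc0 : c ≠ 0 := (Finset.mem_filter.mp hc).2
      have hc0' : c' ≠ 0 := (Finset.mem_filter.mp hc').2
      rw [← (hw c hc0).2, ← (hw c' hc0').2, h]
  -- main computation
  have key : (∑ k, z k ^ ν) * (starRingEnd ℂ) (∑ k, z k ^ ν) = (n : ℂ) - 1 := by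
    rw [map_sum, Finset.sum_mul_sum]
    have h1 : ∀ j : Fin n, ∀ k : Fin n, z j ^ ν * (starRingEnd ℂ) (z k ^ ν)
        = e ((ν : ℤ) * ((((a j - a k : ℤ) : ZMod N)).val : ℤ)) := by
      intro j k
      rw [hterm j k, e_val]
    calc (∑ j : Fin n, ∑ k : Fin n, z j ^ ν * (starRingEnd ℂ) (z k ^ ν))
        = ∑ p : Fin n × Fin n, e ((ν : ℤ) * ((((a p.1 - a p.2 : ℤ) : ZMod N)).val : ℤ)) := by
          rw [Fintype.sum_prod_type]
          exact Finset.sum_congr rfl fun j _ => Finset.sum_congr rfl fun k _ => h1 j k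
      _ = (∑ p ∈ Finset.univ.filter (fun p : Fin n × Fin n => p.1 = p.2),
            e ((ν : ℤ) * ((((a p.1 - a p.2 : ℤ) : ZMod N)).val : ℤ)))
          + ∑ p ∈ t, e ((ν : ℤ) * ((((a p.1 - a p.2 : ℤ) : ZMod N)).val : ℤ)) := by
          rw [htdef, Finset.sum_filter_add_sum_filter_not]
      _ = (n : ℂ) - 1 := by
          have hdiag : ∑ p ∈ Finset.univ.filter (fun p : Fin n × Fin n => p.1 = p.2),
              e ((ν : ℤ) * ((((a p.1 - a p.2 : ℤ) : ZMod N)).val : ℤ)) = (n : ℂ) := by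
            have hone : ∀ p ∈ Finset.univ.filter (fun p : Fin n × Fin n => p.1 = p.2),
                e ((ν : ℤ) * ((((a p.1 - a p.2 : ℤ) : ZMod N)).val : ℤ)) = 1 := by
              intro p hp
              have hp2 : p.1 = p.2 := (Finset.mem_filter.mp hp).2
              rw [hp2, sub_self]
              norm_num [ZMod.val_zero, e_zero]
            rw [Finset.sum_congr rfl hone, Finset.sum_const, nsmul_eq_mul, mul_one]
            have h2 : (Finset.univ.filter (fun p : Fin n × Fin n => p.1 = p.2))
                = Finset.univ.image (fun i : Fin n => (i, i)) := by
              ext p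
              simp only [Finset.mem_filter, Finset.mem_univ, true_and, Finset.mem_image]
              constructor
              · intro h
                exact ⟨p.1, Prod.ext rfl h⟩
              · rintro ⟨i, rfl⟩
                rfl
            rw [h2, Finset.card_image_of_injective _ (fun i j hij => (Prod.ext_iff.mp hij).1),
              Finset.card_univ, Fintype.card_fin]
          have hoff : ∑ p ∈ t, e ((ν : ℤ) * ((((a p.1 - a p.2 : ℤ) : ZMod N)).val : ℤ)) = -1 := by
            rw [← himage, Finset.sum_image]
            · have h2 : ∀ c ∈ s, e ((ν : ℤ) * ((((a (w c).1 - a (w c).2 : ℤ) : ZMod N)).val : ℤ))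
                  = e ((ν : ℤ) * ((c.val : ℤ))) := by
                intro c hc
                have hc0 : c ≠ 0 := (Finset.mem_filter.mp hc).2
                rw [(hw c hc0).2]
              rw [Finset.sum_congr rfl h2]
              have h3 : ∑ c ∈ s, e ((ν : ℤ) * (c.val : ℤ))
                  = (∑ c : ZMod N, e ((ν : ℤ) * (c.val : ℤ)))
                    - e ((ν : ℤ) * (((0 : ZMod N)).val : ℤ)) := by
                rw [hsdef, Finset.filter_ne']
                rw [Finset.sum_erase_eq_sub (Finset.mem_univ _)]
              rw [h3, hsum0, ZMod.val_zero]
              simp [e_zero]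
            · intro c hc c' hc' h
              have hc0 : c ≠ 0 := (Finset.mem_filter.mp hc).2
              have hc0' : c' ≠ 0 := (Finset.mem_filter.mp hc').2
              rw [← (hw c hc0).2, ← (hw c' hc0').2, h]
          rw [hdiag, hoff]
          ring
  -- conclude
  have hnormsq : Complex.normSq (∑ k, z k ^ ν) = (n : ℝ) - 1 := by
    have h := key
    rw [Complex.mul_conj] at h
    exact_mod_cast h
  rw [Complex.norm_def, hnormsq]
end

section
/- Let (z_1,...,z_n) be unimodular complex numbers with |∑_{k=1}^n z_k^ν| = √(n−1) for all ν = 1, ..., n²−n. Then there exist a complex number α with |α| = 1 and integers a_1, ..., a_n forming a perfect difference set of order n−1 modulo n²−n+1, such that z_k = α·e^{2πi a_k/(n²−n+1)} for each k. -/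
open Finset Complex Real
open scoped Matrix

theorem minimal_system_is_difference_set (n : ℕ) (hn : 2 ≤ n) (z : Fin n → ℂ)
    (hz : ∀ k, ‖z k‖ = 1)
    (hS : ∀ ν ∈ Finset.Icc 1 (n ^ 2 - n),
      ‖∑ k, z k ^ ν‖ = Real.sqrt ((n : ℝ) - 1)) :
    ∃ (α : ℂ) (a : Fin n → ℤ), ‖α‖ = 1 ∧
      (∀ c : ZMod (n ^ 2 - n + 1), c ≠ 0 →
        ∃! p : Fin n × Fin n,
          p.1 ≠ p.2 ∧ ((a p.1 - a p.2 : ℤ) : ZMod (n ^ 2 - n + 1)) = c) ∧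
      ∀ k, z k = α * Complex.exp (2 * Real.pi * Complex.I * (a k : ℝ) / (n ^ 2 - n + 1 : ℝ)) := by
  classical
  set N := n ^ 2 - n + 1 with hNdef
  have hnn : n ≤ n ^ 2 := by nlinarith
  have hN0 : N ≠ 0 := Nat.succ_ne_zero _
  haveI : NeZero N := ⟨hN0⟩
  haveI : NeZero n := ⟨by omega⟩
  have hzne : ∀ k, z k ≠ 0 := fun k => by
    intro h; have := hz k; rw [h] at this; simp at this
  have hzconj : ∀ k, (starRingEnd ℂ) (z k) = (z k)⁻¹ := fun k =>
    (Complex.inv_eq_conj (hz k)).symm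
  -- the index type
  set D : Finset (Fin n × Fin n) := (univ : Finset (Fin n)).offDiag with hD
  have hDcard : D.card = n ^ 2 - n := by
    rw [hD, Finset.offDiag_card]; simp [sq]
  have hcardι : Fintype.card (Option {x // x ∈ D}) = N := by
    rw [Fintype.card_option, Fintype.card_coe, hDcard]
  set f : Option {x // x ∈ D} → ℂ := fun o => o.elim 1 (fun p => z p.1.1 * (starRingEnd ℂ) (z p.1.2)) with hf
  have hfabs : ∀ x, ‖f x‖ = 1 := by
    rintro (_ | p)
    · simp [hf]
    · simp [hf, map_mul, hz p.1.1, hz p.1.2]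
  have hfne : ∀ x, f x ≠ 0 := fun x h => by
    have := hfabs x; rw [h] at this; simp at this
  have hfconj : ∀ x, (starRingEnd ℂ) (f x) = (f x)⁻¹ := fun x =>
    (Complex.inv_eq_conj (hfabs x)).symm
  -- power sums vanish
  have hfs : ∀ s : ℕ, 1 ≤ s → s ≤ n ^ 2 - n → ∑ x : (Option {x // x ∈ D}), f x ^ s = 0 := by
    intro s hs1 hs2
    have hT : (∑ k, z k ^ s) * (starRingEnd ℂ) (∑ k, z k ^ s) = (n : ℂ) - 1 := by
      rw [Complex.mul_conj, ← Complex.sq_norm, hS s (Finset.mem_Icc.mpr ⟨hs1, hs2⟩),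
        Real.sq_sqrt (by
          have : (1:ℝ) ≤ (n:ℝ) := by exact_mod_cast hn.trans' one_le_two
          linarith)]
      push_cast; ring
    have hprod : ∑ p ∈ (univ : Finset (Fin n)).diag ∪ D,
        (z p.1 * (starRingEnd ℂ) (z p.2)) ^ s = (n : ℂ) - 1 := by
      rw [Finset.diag_union_offDiag]
      rw [show ∑ p ∈ (univ : Finset (Fin n)) ×ˢ (univ : Finset (Fin n)),
          (z p.1 * (starRingEnd ℂ) (z p.2)) ^ s
          = ∑ j, ∑ k, z j ^ s * (starRingEnd ℂ) (z k ^ s) by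
        rw [Finset.sum_product]; simp [mul_pow, map_pow]]
      rw [← Finset.sum_mul_sum, ← map_sum]
      exact hT
    have hdiag : ∑ p ∈ (univ : Finset (Fin n)).diag,
        (z p.1 * (starRingEnd ℂ) (z p.2)) ^ s = (n : ℂ) := by
      have h1 : ∀ p ∈ (univ : Finset (Fin n)).diag,
          (z p.1 * (starRingEnd ℂ) (z p.2)) ^ s = 1 := by
        intro p hp
        rcases Finset.mem_diag.mp hp with ⟨-, h2⟩
        rw [← h2, Complex.mul_conj]
        rw [show Complex.normSq (z p.1) = 1 by
          rw [← Complex.sq_norm, hz p.1]; norm_num]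
        simp
      rw [Finset.sum_congr rfl h1, Finset.sum_const, Finset.diag_card]
      simp
    have hoff : ∑ p ∈ D, (z p.1 * (starRingEnd ℂ) (z p.2)) ^ s = -1 := by
      rw [Finset.sum_union (Finset.disjoint_diag_offDiag _), hdiag] at hprod
      linear_combination hprod
    have : ∑ x : Option {x // x ∈ D}, f x ^ s
        = 1 + ∑ p : {x // x ∈ D}, (z p.1.1 * (starRingEnd ℂ) (z p.1.2)) ^ s := by
      rw [Fintype.sum_option]; simp [hf]
    rw [this, Finset.sum_coe_sort D (fun p => (z p.1 * (starRingEnd ℂ) (z p.2)) ^ s), hoff]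
    ring
  -- matrix
  set A : Matrix (Fin N) (Option {x // x ∈ D}) ℂ := fun ν x => f x ^ (ν : ℕ) with hA
  have hAB : A * ((N : ℂ)⁻¹ • Aᴴ) = 1 := by
    ext ν μ
    rw [Matrix.mul_apply, Matrix.one_apply]
    have key : ∑ x : (Option {x // x ∈ D}), A ν x * ((N:ℂ)⁻¹ • Aᴴ) x μ
        = (N:ℂ)⁻¹ * ∑ x : (Option {x // x ∈ D}), f x ^ ((ν:ℤ) - (μ:ℤ)) := by
      rw [Finset.mul_sum]
      refine Finset.sum_congr rfl (fun x _ => ?_)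
      rw [Matrix.smul_apply, Matrix.conjTranspose_apply, hA]
      simp only [smul_eq_mul, star_def]
      rw [map_pow, hfconj, zpow_sub₀ (hfne x), zpow_natCast, zpow_natCast]
      field_simp
      rw [one_div, inv_pow, div_eq_mul_inv]
    rw [key]
    rcases eq_or_ne ν μ with h | h
    · subst h
      have hsum : ∑ x : Option {x // x ∈ D}, f x ^ ((ν:ℤ) - (ν:ℤ)) = (N:ℂ) := by
        simp only [sub_self, zpow_zero, Finset.sum_const, Finset.card_univ, hcardι,
          nsmul_eq_mul, mul_one]
      rw [hsum, if_pos rfl, inv_mul_cancel₀ (Nat.cast_ne_zero.mpr hN0)]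
    · rw [if_neg h]
      have hsum : ∑ x : (Option {x // x ∈ D}), f x ^ ((ν:ℤ) - (μ:ℤ)) = 0 := by
        rcases lt_or_gt_of_ne (fun hc => h (Fin.ext (by exact_mod_cast hc) : ν = μ)) with hlt | hlt
        · -- ν < μ : negative exponent, conjugate
          have h1 : (1:ℕ) ≤ (μ:ℕ) - (ν:ℕ) := by omega
          have h2 : (μ:ℕ) - (ν:ℕ) ≤ n ^ 2 - n := by
            have := μ.isLt; omega
          have h0 := hfs _ h1 h2
          have : ∑ x : (Option {x // x ∈ D}), f x ^ ((ν:ℤ) - (μ:ℤ))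
              = (starRingEnd ℂ) (∑ x : (Option {x // x ∈ D}), f x ^ ((μ:ℕ) - (ν:ℕ))) := by
            rw [map_sum]
            refine Finset.sum_congr rfl (fun x _ => ?_)
            rw [map_pow, hfconj, ← zpow_natCast (f x)⁻¹, inv_zpow, ← zpow_neg]
            congr 1
            push_cast
            omega
          rw [this, h0, map_zero]
        · have h1 : (1:ℕ) ≤ (ν:ℕ) - (μ:ℕ) := by omega
          have h2 : (ν:ℕ) - (μ:ℕ) ≤ n ^ 2 - n := by
            have := ν.isLt; omega
          have h0 := hfs _ h1 h2
          have : ∑ x : (Option {x // x ∈ D}), f x ^ ((ν:ℤ) - (μ:ℤ)) = ∑ x : (Option {x // x ∈ D}), f x ^ ((ν:ℕ) - (μ:ℕ)) := by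
            refine Finset.sum_congr rfl (fun x _ => ?_)
            rw [← zpow_natCast (f x)]
            congr 1
            omega
          rw [this, h0]
      rw [hsum, mul_zero]
  have hBA : ((N : ℂ)⁻¹ • Aᴴ) * A = 1 := by
    have e : Fin N ≃ (Option {x // x ∈ D}) := (Fintype.equivFinOfCardEq hcardι).symm
    exact (Matrix.mul_eq_one_comm_of_equiv e).mp hAB
  -- column orthogonality
  have hcol : ∀ x y : (Option {x // x ∈ D}), x ≠ y →
      ∑ ν : Fin N, ((starRingEnd ℂ) (f x) * f y) ^ (ν : ℕ) = 0 := by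
    intro x y hxy
    have := congrFun (congrFun hBA x) y
    rw [Matrix.mul_apply, Matrix.one_apply, if_neg hxy] at this
    have h2 : ∑ ν : Fin N, ((N:ℂ)⁻¹ • Aᴴ) x ν * A ν y
        = (N:ℂ)⁻¹ * ∑ ν : Fin N, ((starRingEnd ℂ) (f x) * f y) ^ (ν:ℕ) := by
      rw [Finset.mul_sum]
      refine Finset.sum_congr rfl (fun ν _ => ?_)
      rw [Matrix.smul_apply, Matrix.conjTranspose_apply, hA]
      simp only [smul_eq_mul, star_def]
      rw [mul_pow, map_pow]
      ring
    rw [h2] at this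
    have hNne : (N:ℂ)⁻¹ ≠ 0 := by
      simp only [ne_eq, inv_eq_zero, Nat.cast_eq_zero]; exact hN0
    exact (mul_eq_zero.mp this).resolve_left hNne
  -- distinctness and roots of unity
  have hinj : Function.Injective f := by
    intro x y hxy
    by_contra hne
    have h0 := hcol x y hne
    have : (starRingEnd ℂ) (f x) * f y = 1 := by
      rw [← hxy, mul_comm, Complex.mul_conj,
        show Complex.normSq (f x) = 1 by rw [← Complex.sq_norm, hfabs]; norm_num]
      simp
    rw [Finset.sum_congr rfl (fun ν _ => by rw [this, one_pow])] at h0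
    simp only [Finset.sum_const, Finset.card_univ, Fintype.card_fin, nsmul_eq_mul,
      mul_one] at h0
    exact hN0 (by exact_mod_cast h0)
  have hroot : ∀ x y : (Option {x // x ∈ D}), x ≠ y → ((starRingEnd ℂ) (f x) * f y) ^ N = 1 := by
    intro x y hxy
    set u := (starRingEnd ℂ) (f x) * f y with hu
    have hune : u ≠ 1 := by
      intro h
      apply hinj.ne hxy
      have : (f x) * u = (f x) * 1 := by rw [h]
      rw [hu, ← mul_assoc, Complex.mul_conj, mul_one] at this
      rw [show Complex.normSq (f x) = 1 by rw [← Complex.sq_norm, hfabs]; norm_num] at this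
      simpa using this.symm
    have h0 := hcol x y hxy
    rw [Fin.sum_univ_eq_sum_range (fun i => u ^ i) N, geom_sum_eq hune] at h0
    rcases div_eq_zero_iff.mp h0 with h | h
    · exact sub_eq_zero.mp h
    · exact absurd (sub_eq_zero.mp h) hune
  have hNroot : ∀ x : (Option {x // x ∈ D}), (f x) ^ N = 1 := by
    rintro (_ | p)
    · simp [hf]
    · have := hroot none (some p) (by simp)
      simp only [hf, Option.elim] at this ⊢
      rwa [map_one, one_mul] at this
  -- surjectivity onto N-th roots of unity
  have hsurj : ∀ w : ℂ, w ^ N = 1 → ∃ x : (Option {x // x ∈ D}), f x = w := by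
    intro w hw
    set g : (Option {x // x ∈ D}) → {x // x ∈ Polynomial.nthRootsFinset N (1 : ℂ)} :=
      fun x => ⟨f x, (Polynomial.mem_nthRootsFinset (Nat.pos_of_ne_zero hN0) (1 : ℂ)).mpr (hNroot x)⟩
      with hg
    have hginj : Function.Injective g := by
      intro x y hxy
      exact hinj (congrArg Subtype.val hxy)
    have hgcard : Fintype.card (Option {x // x ∈ D})
        = Fintype.card {x // x ∈ Polynomial.nthRootsFinset N (1 : ℂ)} := by
      rw [hcardι, Fintype.card_coe,
        (Complex.isPrimitiveRoot_exp N hN0).card_nthRootsFinset]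
    have hgbij : Function.Bijective g :=
      (Fintype.bijective_iff_injective_and_card g).mpr ⟨hginj, hgcard⟩
    obtain ⟨x, hx⟩ := hgbij.surjective
      ⟨w, (Polynomial.mem_nthRootsFinset (Nat.pos_of_ne_zero hN0) (1 : ℂ)).mpr hw⟩
    exact ⟨x, congrArg Subtype.val hx⟩
  -- the primitive root
  set ζ : ℂ := Complex.exp (2 * ↑π * I / N) with hζdef
  have hζ : IsPrimitiveRoot ζ N := Complex.isPrimitiveRoot_exp N hN0
  have hζne : ζ ≠ 0 := by
    intro h
    have h1 := hζ.pow_eq_one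
    rw [h, zero_pow hN0] at h1
    exact zero_ne_one h1
  have hζabs : ‖ζ‖ = 1 := by
    have harg : (2 * (π : ℂ) * I / (N : ℂ)) = ((2 * π / (N : ℝ) : ℝ) : ℂ) * I := by
      push_cast; ring
    rw [hζdef, harg, Complex.norm_exp_ofReal_mul_I]
  -- exponent for every z k relative to z 0
  have hzk : ∀ k : Fin n, (z k * (starRingEnd ℂ) (z 0)) ^ N = 1 := by
    intro k
    rcases eq_or_ne k 0 with rfl | hk
    · rw [Complex.mul_conj,
        show Complex.normSq (z 0) = 1 by rw [← Complex.sq_norm, hz 0]; norm_num]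
      simp
    · have hmem : (k, (0 : Fin n)) ∈ D := by
        rw [hD, Finset.mem_offDiag]
        exact ⟨Finset.mem_univ _, Finset.mem_univ _, hk⟩
      exact hNroot (some ⟨(k, 0), hmem⟩)
  choose i hi hzi using fun k => hζ.eq_pow_of_pow_eq_one (hzk k)
  set a : Fin n → ℤ := fun k => (i k : ℤ) with ha
  have hzz : ∀ k, z k = z 0 * ζ ^ (i k) := by
    intro k
    have h2 : z 0 * (z k * (starRingEnd ℂ) (z 0)) = z k := by
      rw [hzconj 0, mul_comm (z k) ((z 0)⁻¹), ← mul_assoc, mul_inv_cancel₀ (hzne 0), one_mul]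
    rw [← hzi k] at h2
    exact h2.symm
  have hzetainj : ∀ x y : ℤ, ζ ^ x = ζ ^ y ↔ ((x : ZMod N) = (y : ZMod N)) := by
    intro x y
    rw [show ζ ^ x = ζ ^ y ↔ ζ ^ (x - y) = 1 by
        rw [zpow_sub₀ hζne, div_eq_one_iff_eq (zpow_ne_zero _ hζne)],
      hζ.zpow_eq_one_iff_dvd, ← ZMod.intCast_zmod_eq_zero_iff_dvd, Int.cast_sub, sub_eq_zero]
  have hpair : ∀ p q : Fin n, z p * (starRingEnd ℂ) (z q) = ζ ^ ((a p) - (a q)) := by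
    intro p q
    rw [hzz p, hzz q, map_mul, map_pow, hzconj 0, ← Complex.inv_eq_conj hζabs, ha]
    rw [zpow_sub₀ hζne, zpow_natCast, zpow_natCast]
    have h0 : z 0 * ζ ^ i p * ((z 0)⁻¹ * (ζ⁻¹) ^ i q) = (z 0 * (z 0)⁻¹) * (ζ ^ i p * (ζ ^ i q)⁻¹) := by
      rw [inv_pow]; ring
    rw [h0, mul_inv_cancel₀ (hzne 0), one_mul, div_eq_mul_inv]
  refine ⟨z 0, a, hz 0, ?_, ?_⟩
  · -- difference set property
    intro c hc
    have hcval : 0 < c.val := Nat.pos_of_ne_zero (fun h => hc ((ZMod.val_eq_zero c).mp h))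
    have hcvallt : c.val < N := ZMod.val_lt c
    have hwroot : (ζ ^ c.val) ^ N = 1 := by
      rw [← pow_mul, mul_comm, pow_mul, hζ.pow_eq_one, one_pow]
    obtain ⟨x, hx⟩ := hsurj (ζ ^ c.val) hwroot
    have hwne1 : ζ ^ c.val ≠ 1 := hζ.pow_ne_one_of_pos_of_lt hcval.ne' hcvallt
    rcases x with _ | p
    · exfalso; apply hwne1; rw [← hx]; simp [hf]
    · obtain ⟨⟨u, v⟩, hmem⟩ := p
      have huv : u ≠ v := (Finset.mem_offDiag.mp hmem).2.2
      have hxval : z u * (starRingEnd ℂ) (z v) = ζ ^ c.val := by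
        rw [← hx]; simp [hf]
      have hcast : ((a u - a v : ℤ) : ZMod N) = c := by
        have h1 : ζ ^ (a u - a v) = ζ ^ ((c.val : ℤ)) := by
          rw [← hpair, hxval, zpow_natCast]
        have h2 := (hzetainj _ _).mp h1
        rw [h2]
        push_cast
        rw [ZMod.natCast_val, ZMod.cast_id]
      refine ⟨(u, v), ⟨huv, hcast⟩, ?_⟩
      rintro ⟨u', v'⟩ ⟨huv' , hcast'⟩
      have h1 : ζ ^ (a u' - a v') = ζ ^ ((c.val : ℤ)) := by
        rw [hzetainj]
        rw [hcast']
        push_cast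
        rw [ZMod.natCast_val, ZMod.cast_id]
      have hmem' : (u', v') ∈ D := by
        rw [hD, Finset.mem_offDiag]
        exact ⟨Finset.mem_univ _, Finset.mem_univ _, huv'⟩
      have hfeq : f (some ⟨(u', v'), hmem'⟩) = f (some ⟨(u, v), hmem⟩) := by
        simp only [hf, Option.elim]
        rw [hpair, hpair, h1, hzetainj, hcast]
        push_cast
        rw [ZMod.natCast_val, ZMod.cast_id]
      have := hinj hfeq
      simp only [Option.some.injEq, Subtype.mk.injEq, Prod.mk.injEq] at this
      exact Prod.ext this.1 this.2
  · -- the representation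
    intro k
    rw [hzz k]
    congr 1
    rw [hζdef, ← Complex.exp_nat_mul]
    congr 1
    have hNR : ((N:ℝ) : ℂ) = (N : ℂ) := by push_cast; ring
    have hreal : ((n:ℝ) ^ 2 - (n:ℝ) + 1) = (N : ℝ) := by
      rw [hNdef]
      push_cast [hnn]
      ring
    rw [ha]
    push_cast [← hreal]
    have hC : ((n:ℂ) ^ 2 - (n:ℂ) + 1) = (N : ℂ) := by exact_mod_cast hreal
    rw [hC]
    field_simp
end

section
/- Let (z_1,...,z_n) be unimodular complex numbers, N = n²−n+1, and write |∑_{k=1}^n z_k^ν|² = n + ∑_{k≠l} e^{2πiν(θ_k−θ_l)} where z_k = e^{2πiθ_k}. Then |∑_{k=1}^n z_k^ν| = √(n−1) for all ν = 1, ..., N−1 if and only if the multiset consisting of 0 together with the N−1 differences θ_k − θ_l (k ≠ l), reduced mod 1, equals the multiset {j/N : j = 0, 1, ..., N−1}. -/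
open Finset Complex Real Polynomial

lemma aux_esymm_zero (s : Multiset ℂ) (k : ℕ) (hk1 : 1 ≤ k)
    (hp : ∀ ν, 1 ≤ ν → ν ≤ k → (s.map (· ^ ν)).sum = 0) : s.esymm k = 0 := by
  obtain ⟨l, rfl⟩ : ∃ l : List ℂ, (l : Multiset ℂ) = s := ⟨s.toList, s.coe_toList⟩
  have hl : (Finset.univ.val.map l.get) = (l : Multiset ℂ) := by
    have := List.map_get_finRange l
    calc (Finset.univ.val.map l.get)
        = ((List.finRange l.length : Multiset (Fin l.length)).map l.get) := by congr 1
      _ = (l : Multiset ℂ) := by rw [Multiset.map_coe, this]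
  have key := congrArg (MvPolynomial.aeval l.get) (MvPolynomial.mul_esymm_eq_sum (Fin l.length) ℂ k)
  simp only [map_mul, map_natCast, MvPolynomial.aeval_esymm_eq_multiset_esymm, map_sum, map_pow,
    map_neg, map_one, MvPolynomial.psum, MvPolynomial.aeval_X] at key
  rw [hl] at key
  have hz : ∀ x ∈ filter (fun a : ℕ × ℕ => a.1 < k) (antidiagonal k),
      (-1 : ℂ) ^ x.1 * (↑l : Multiset ℂ).esymm x.1 * ∑ i : Fin l.length, l.get i ^ x.2 = 0 := by
    rintro ⟨a, b⟩ hx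
    simp only [Finset.mem_filter, Finset.HasAntidiagonal.mem_antidiagonal] at hx
    have hsum : ∑ i : Fin l.length, l.get i ^ b = ((l : Multiset ℂ).map (· ^ b)).sum := by
      rw [← hl, Multiset.map_map]
      rfl
    rw [hsum, hp b (by omega) (by omega), mul_zero]
  rw [Finset.sum_eq_zero hz, mul_zero] at key
  have hk0 : (k : ℂ) ≠ 0 := Nat.cast_ne_zero.mpr (by omega)
  exact (mul_eq_zero.mp key).resolve_left hk0

lemma aux_roots (s : Multiset ℂ) (N : ℕ) (hN2 : 2 ≤ N) (hcard : Multiset.card s = N)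
    (h1 : (1 : ℂ) ∈ s)
    (hp : ∀ ν, 1 ≤ ν → ν ≤ N - 1 → (s.map (· ^ ν)).sum = 0) :
    s = (Multiset.range N).map (fun j => Complex.exp (2 * π * I / N) ^ j) := by
  set Q : Polynomial ℂ := (s.map fun a => X - C a).prod with hQ
  have hNpos : 0 < N := by omega
  have hesymm : ∀ j, 1 ≤ j → j ≤ N - 1 → s.esymm j = 0 := fun j hj1 hj2 =>
    aux_esymm_zero s j hj1 (fun ν h1 h2 => hp ν h1 (by omega))
  have hcoeff : ∀ k ≤ N, Q.coeff k = (-1) ^ (N - k) * s.esymm (N - k) := by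
    intro k hk
    rw [hQ, Multiset.prod_X_sub_C_coeff s (by omega), hcard]
  have hdeg : Q.natDegree = N := by
    rw [hQ, natDegree_multiset_prod_X_sub_C_eq_card, hcard]
  have hQform : Q = X ^ N + C (Q.coeff 0) := by
    ext k
    rw [coeff_add, coeff_X_pow, coeff_C]
    rcases Nat.lt_trichotomy k N with hkN | heq | hkN
    · rcases Nat.eq_zero_or_pos k with rfl | hk0
      · rw [if_neg (by omega), if_pos rfl, zero_add]
      · rw [hcoeff k hkN.le, hesymm (N - k) (by omega) (by omega), mul_zero,
          if_neg (by omega), if_neg (by omega), add_zero]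
    · subst heq
      rw [hcoeff k le_rfl, Nat.sub_self, if_pos rfl, if_neg (by omega), add_zero]
      simp [Multiset.esymm]
    · rw [coeff_eq_zero_of_natDegree_lt (hdeg ▸ hkN), if_neg (by omega), if_neg (by omega),
        add_zero]
  have heval : Q.eval 1 = 0 := by
    rw [hQ, eval_multiset_prod]
    refine Multiset.prod_eq_zero ?_
    rw [Multiset.map_map]
    refine Multiset.mem_map.mpr ⟨1, h1, ?_⟩
    simp
  have hc : Q.coeff 0 = -1 := by
    have := heval
    rw [hQform] at this
    simp at this
    linear_combination this
  have hQ1 : Q = X ^ N - C 1 := by rw [hQform, hc]; ring_nf; rw [map_neg]; ring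
  have hζ : IsPrimitiveRoot (Complex.exp (2 * π * I / N)) N :=
    Complex.isPrimitiveRoot_exp N hNpos.ne'
  have hroots : s = Q.roots := (roots_multiset_prod_X_sub_C s).symm
  rw [hroots, hQ1]
  have : (X ^ N - C (1:ℂ)).roots = Polynomial.nthRoots N (1:ℂ) := rfl
  rw [this, hζ.nthRoots_eq (one_pow N)]
  simp

lemma aux_fract_arg (x : ℝ) (hx : 0 ≤ x) (hx1 : x < 1) :
    Int.fract (Complex.arg (Complex.exp (2 * π * I * x)) / (2 * π)) = x := by
  have hπ : (0:ℝ) < π := Real.pi_pos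
  have hcast : (2 * π * I * (x:ℂ)) = ((2 * π * x : ℝ) : ℂ) * I := by push_cast; ring
  rw [hcast, Complex.arg_exp_mul_I]
  rcases le_or_gt x (1/2) with hhalf | hhalf
  · have h1 : toIocMod (mul_pos two_pos Real.pi_pos) (-π) (2*π*x) = 2*π*x :=
      (toIocMod_eq_iff (mul_pos two_pos Real.pi_pos)).mpr
        ⟨⟨by nlinarith, by nlinarith⟩, 0, by simp⟩
    rw [h1, mul_comm (2*π) x, mul_div_assoc, div_self (by positivity), mul_one]
    exact Int.fract_eq_self.mpr ⟨hx, hx1⟩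
  · have h1 : toIocMod (mul_pos two_pos Real.pi_pos) (-π) (2*π*x) = 2*π*x - 2*π :=
      (toIocMod_eq_iff (mul_pos two_pos Real.pi_pos)).mpr
        ⟨⟨by nlinarith, by nlinarith⟩, 1, by simp⟩
    have h2 : (2 * π * x - 2 * π) / (2 * π) = x + (-1 : ℤ) := by
      push_cast
      field_simp
      ring
    rw [h1, h2, Int.fract_add_intCast]
    exact Int.fract_eq_self.mpr ⟨hx, hx1⟩

theorem power_sums_iff_differences_multiset (n : ℕ) (hn : 2 ≤ n) (N : ℕ)
    (hN : N = n ^ 2 - n + 1) (θ : Fin n → ℝ) (z : Fin n → ℂ)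
    (hzdef : ∀ k, z k = Complex.exp (2 * Real.pi * Complex.I * (θ k : ℝ))) :
    (∀ ν ∈ Finset.Icc 1 (N - 1),
        ‖∑ k, z k ^ ν‖ = Real.sqrt ((n : ℝ) - 1)) ↔
      (0 : ℝ) ::ₘ
          ((Finset.univ.filter (fun p : Fin n × Fin n => p.1 ≠ p.2)).val.map
            (fun p => Int.fract (θ p.1 - θ p.2))) =
        (Multiset.range N).map (fun j => (j : ℝ) / N) := by
  set e' : ℝ → ℂ := fun x => Complex.exp (2 * Real.pi * Complex.I * (x : ℝ)) with he'
  set D : Finset (Fin n × Fin n) := Finset.univ.filter (fun p => p.1 ≠ p.2) with hD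
  set M : Multiset ℝ := (0 : ℝ) ::ₘ D.val.map (fun p => Int.fract (θ p.1 - θ p.2)) with hM
  set Rms : Multiset ℝ := (Multiset.range N).map (fun j => (j : ℝ) / N) with hR
  have hNn : N = n * n - n + 1 := by rw [hN]; ring_nf
  have hN3 : 3 ≤ N := by nlinarith [Nat.sub_add_cancel (Nat.le_mul_of_pos_left n (by omega) :
    n ≤ n * n)]
  have hNpos : (0:ℝ) < N := by positivity
  have hNR : (N:ℝ) ≠ 0 := by positivity
  have hDcard : D.card = n * n - n := by
    have : Finset.offDiag (Finset.univ : Finset (Fin n)) = D := by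
      ext p; simp [Finset.mem_offDiag, hD]
    rw [← this, Finset.offDiag_card, Finset.card_univ, Fintype.card_fin]
  have hMcard : Multiset.card M = N := by
    rw [hM, Multiset.card_cons, Multiset.card_map]
    have : Multiset.card D.val = D.card := rfl
    rw [this, hDcard]
    omega
  have he'per : ∀ x : ℝ, e' (Int.fract x) = e' x := by
    intro x
    have harg : (2 * Real.pi * Complex.I * ((Int.fract x : ℝ) : ℂ))
        = 2 * Real.pi * Complex.I * (x:ℂ) + (-⌊x⌋ : ℤ) * (2 * Real.pi * Complex.I) := by
      rw [Int.fract]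
      push_cast
      ring
    rw [he']
    simp only
    rw [harg, Complex.exp_add, Complex.exp_int_mul_two_pi_mul_I, mul_one]
  have he'zero : e' 0 = 1 := by
    rw [he']
    simp
  have hterm : ∀ (a b : ℝ) (ν : ℕ),
      e' a ^ ν * (starRingEnd ℂ) (e' b ^ ν) = e' (a - b) ^ ν := by
    intro a b ν
    rw [map_pow, ← mul_pow]
    congr 1
    rw [he']
    simp only
    rw [← Complex.exp_conj, ← Complex.exp_add]
    congr 1
    simp only [map_mul, Complex.conj_I, Complex.conj_ofReal, map_ofNat]
    push_cast
    ring
  have key : ∀ ν : ℕ, (∑ k, z k ^ ν) * (starRingEnd ℂ) (∑ k, z k ^ ν)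
      = ((n:ℂ) - 1) + ((M.map e').map (· ^ ν)).sum := by
    intro ν
    have h1 : (∑ k, z k ^ ν) * (starRingEnd ℂ) (∑ k, z k ^ ν)
        = ∑ p ∈ (Finset.univ ×ˢ Finset.univ : Finset (Fin n × Fin n)),
            e' (θ p.1 - θ p.2) ^ ν := by
      rw [map_sum, Finset.sum_mul_sum, ← Finset.sum_product']
      refine Finset.sum_congr rfl fun p _ => ?_
      rw [hzdef, hzdef]
      exact hterm _ _ _
    rw [h1, ← Finset.sum_filter_add_sum_filter_not (Finset.univ ×ˢ Finset.univ)
      (fun p : Fin n × Fin n => p.1 = p.2)]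
    have hdiag : ∑ p ∈ (Finset.univ ×ˢ Finset.univ).filter
        (fun p : Fin n × Fin n => p.1 = p.2), e' (θ p.1 - θ p.2) ^ ν = (n : ℂ) := by
      have h2 : ∀ p ∈ (Finset.univ ×ˢ Finset.univ).filter
          (fun p : Fin n × Fin n => p.1 = p.2), e' (θ p.1 - θ p.2) ^ ν = 1 := by
        rintro ⟨a, b⟩ hp
        simp only [Finset.mem_filter] at hp
        rcases hp with ⟨-, rfl⟩
        rw [sub_self, he'zero, one_pow]
      rw [Finset.sum_congr rfl h2, Finset.sum_const, nsmul_eq_mul, mul_one]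
      congr 1
      have : (Finset.univ ×ˢ Finset.univ).filter (fun p : Fin n × Fin n => p.1 = p.2)
          = Finset.diag Finset.univ := by ext p; simp [Finset.mem_diag]
      rw [this, Finset.diag_card, Finset.card_univ, Fintype.card_fin]
    have hoff : (Finset.univ ×ˢ Finset.univ).filter
        (fun p : Fin n × Fin n => ¬ p.1 = p.2) = D := by
      rw [Finset.univ_product_univ, hD]
    rw [hdiag, hoff]
    have hMside : ((M.map e').map (· ^ ν)).sum
        = 1 + ∑ p ∈ D, e' (θ p.1 - θ p.2) ^ ν := by
      rw [hM]
      rw [Multiset.map_cons, Multiset.map_cons, Multiset.sum_cons, he'zero, one_pow]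
      congr 1
      rw [Multiset.map_map, Multiset.map_map]
      refine congrArg Multiset.sum (Multiset.map_congr rfl fun p hp => ?_)
      simp only [Function.comp_apply]
      rw [he'per]
    rw [hMside]
    ring
  have hn1 : (0:ℝ) ≤ (n:ℝ) - 1 := by
    have : (2:ℝ) ≤ n := by exact_mod_cast hn
    linarith
  have hiff : ∀ ν : ℕ, (‖∑ k, z k ^ ν‖ = Real.sqrt ((n : ℝ) - 1))
      ↔ ((M.map e').map (· ^ ν)).sum = 0 := by
    intro ν
    constructor
    · intro h
      have h2 : (∑ k, z k ^ ν) * (starRingEnd ℂ) (∑ k, z k ^ ν) = ((n:ℂ) - 1) := by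
        rw [Complex.mul_conj]
        have h3 : Complex.normSq (∑ k, z k ^ ν) = (n:ℝ) - 1 := by
          rw [Complex.normSq_eq_norm_sq, h, Real.sq_sqrt hn1]
        rw [h3]
        push_cast
        ring
      have h4 := key ν
      rw [h2] at h4
      linear_combination -h4
    · intro h
      have h2 : (∑ k, z k ^ ν) * (starRingEnd ℂ) (∑ k, z k ^ ν) = ((n:ℂ) - 1) := by
        rw [key ν, h, add_zero]
      rw [Complex.mul_conj] at h2
      have h3 : Complex.normSq (∑ k, z k ^ ν) = (n:ℝ) - 1 := by
        exact_mod_cast h2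
      rw [Complex.norm_def, h3]
  set ζ : ℂ := Complex.exp (2 * Real.pi * Complex.I / N) with hζdef
  have hζ : IsPrimitiveRoot ζ N := Complex.isPrimitiveRoot_exp N (by omega)
  have hclean : Rms = (Multiset.range N).map (fun j : ℕ => (j:ℝ)/(N:ℝ)) := by
    rw [hR]; simp [Multiset.map_map]
  have hRmap : Rms.map e' = (Multiset.range N).map (fun j => ζ ^ j) := by
    rw [hclean, Multiset.map_map]
    refine Multiset.map_congr rfl fun j hj => ?_
    simp only [Function.comp_apply]
    rw [he', hζdef]
    simp only
    rw [← Complex.exp_nat_mul]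
    congr 1
    push_cast
    field_simp
  constructor
  · intro h
    have hsums : ∀ ν, 1 ≤ ν → ν ≤ N - 1 → ((M.map e').map (· ^ ν)).sum = 0 :=
      fun ν h1 h2 => (hiff ν).mp (h ν (Finset.mem_Icc.mpr ⟨h1, h2⟩))
    have hone : (1:ℂ) ∈ M.map e' := Multiset.mem_map.mpr ⟨0, Multiset.mem_cons_self _ _, he'zero⟩
    have hW : M.map e' = (Multiset.range N).map (fun j => ζ ^ j) :=
      aux_roots (M.map e') N (by omega) (by rw [Multiset.card_map, hMcard]) hone hsums
    have hMR : M.map e' = Rms.map e' := by rw [hW, hRmap]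
    set g : ℂ → ℝ := fun w => Int.fract (Complex.arg w / (2 * Real.pi)) with hg
    have hge : ∀ x : ℝ, 0 ≤ x → x < 1 → g (e' x) = x := fun x h1 h2 => aux_fract_arg x h1 h2
    have hMmem : ∀ x ∈ M, g (e' x) = x := by
      intro x hx
      rcases Multiset.mem_cons.mp hx with rfl | hx'
      · exact hge 0 le_rfl one_pos
      · obtain ⟨p, -, rfl⟩ := Multiset.mem_map.mp hx'
        exact hge _ (Int.fract_nonneg _) (Int.fract_lt_one _)
    have hRmem : ∀ x ∈ Rms, g (e' x) = x := by
      intro x hx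
      rw [hclean] at hx
      obtain ⟨j, hj, rfl⟩ := Multiset.mem_map.mp hx
      rw [Multiset.mem_range] at hj
      refine hge _ (by positivity) ((div_lt_one hNpos).mpr ?_)
      exact_mod_cast hj
    calc M = M.map (fun x => g (e' x)) := by
            rw [Multiset.map_congr rfl hMmem, Multiset.map_id']
      _ = (M.map e').map g := by rw [Multiset.map_map]; rfl
      _ = (Rms.map e').map g := by rw [hMR]
      _ = Rms.map (fun x => g (e' x)) := by rw [Multiset.map_map]; rfl
      _ = Rms := by rw [Multiset.map_congr rfl hRmem, Multiset.map_id']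
  · intro h ν hν
    rw [Finset.mem_Icc] at hν
    refine (hiff ν).mpr ?_
    rw [show M = Rms from h, hRmap, Multiset.map_map]
    have hterm2 : ∀ j ∈ Multiset.range N, ((· ^ ν) ∘ fun j => ζ ^ j) j = (ζ ^ ν) ^ j := by
      intro j hj
      simp only [Function.comp_apply]
      rw [← pow_mul, mul_comm, pow_mul]
    rw [Multiset.map_congr rfl hterm2]
    have hsum : ((Multiset.range N).map (fun j => (ζ ^ ν) ^ j)).sum
        = ∑ j ∈ Finset.range N, (ζ ^ ν) ^ j := rfl
    rw [hsum, geom_sum_eq, ← pow_mul, mul_comm, pow_mul, hζ.pow_eq_one, one_pow, sub_self,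
      zero_div]
    exact hζ.pow_ne_one_of_pos_of_lt (by omega) (by omega)
end

section
/- Suppose n−1 is a prime power and (z_1,...,z_n) is an n-tuple of unimodular complex numbers achieving max_{ν=1,...,n²−n} |∑_{k=1}^n z_k^ν| = √(n−1). Then there exist α with |α| = 1 and a perfect difference set (a_1,...,a_n) of order n−1 such that z_k = α·e^{2πi a_k/(n²−n+1)} for all k. -/
open Finset Complex Real

lemma helper_eq_of_sum {α : Type*} {s : Finset α} {f : α → ℝ} {b : ℝ}
    (hle : ∀ x ∈ s, f x ≤ b) (hsum : (s.card : ℝ) * b ≤ ∑ x ∈ s, f x) :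
    ∀ x ∈ s, f x = b := by
  have h0 : ∑ x ∈ s, (b - f x) ≤ 0 := by
    rw [Finset.sum_sub_distrib, Finset.sum_const, nsmul_eq_mul]
    linarith
  have h1 : ∀ x ∈ s, 0 ≤ b - f x := fun x hx => by linarith [hle x hx]
  have h2 : ∑ x ∈ s, (b - f x) = 0 := le_antisymm h0 (Finset.sum_nonneg h1)
  intro x hx
  have := (Finset.sum_eq_zero_iff_of_nonneg h1).mp h2 x hx
  linarith

lemma helper_geom {N : ℕ} (hN : 0 < N) (w : ℂ) (hw : w ^ N = 1) :
    ∑ ν ∈ Finset.range N, w ^ ν = if w = 1 then (N : ℂ) else 0 := by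
  split_ifs with h
  · simp [h]
  · rw [geom_sum_eq h, hw, sub_self, zero_div]

lemma helper_geom_zero {N : ℕ} (hN : 0 < N) {w : ℂ}
    (h0 : ∑ ν ∈ Finset.range N, w ^ ν = 0) : w ^ N = 1 ∧ w ≠ 1 := by
  have hw1 : w ≠ 1 := by
    rintro rfl
    simp [Finset.sum_const] at h0
    omega
  refine ⟨?_, hw1⟩
  have h1 := geom_sum_eq hw1 N
  rw [h0] at h1
  have h2 : w - 1 ≠ 0 := sub_ne_zero.mpr hw1
  have h3 : w ^ N - 1 = 0 := (div_eq_zero_iff.mp h1.symm).resolve_right h2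
  exact sub_eq_zero.mp h3

lemma helper_powkey (x y : ℂ) (hx : x ≠ 0) (hy : y ≠ 0) (ν μ : ℕ) :
    (x * y⁻¹) ^ ν * (y * x⁻¹) ^ μ = x ^ ((ν : ℤ) - μ) * y ^ ((μ : ℤ) - ν) := by
  rw [zpow_sub₀ hx, zpow_sub₀ hy, zpow_natCast, zpow_natCast, zpow_natCast, zpow_natCast,
    mul_pow, mul_pow, inv_pow, inv_pow]
  field_simp

set_option maxHeartbeats 2000000 in
theorem minimizer_is_fabrykowski (n : ℕ) (hn : 2 ≤ n) (hq : IsPrimePow (n - 1))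
    (z : Fin n → ℂ) (hz : ∀ k, ‖z k‖ = 1)
    (hmax : (Finset.Icc 1 (n ^ 2 - n)).sup'
        (Finset.nonempty_Icc.mpr (Nat.le_sub_of_add_le (by nlinarith)))
        (fun ν => ‖∑ k, z k ^ ν‖) = Real.sqrt ((n : ℝ) - 1)) :
    ∃ (α : ℂ) (a : Fin n → ℤ), ‖α‖ = 1 ∧
      (∀ c : ZMod (n ^ 2 - n + 1), c ≠ 0 →
        ∃! p : Fin n × Fin n,
          p.1 ≠ p.2 ∧ ((a p.1 - a p.2 : ℤ) : ZMod (n ^ 2 - n + 1)) = c) ∧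
      ∀ k, z k = α * Complex.exp (2 * Real.pi * Complex.I * (a k : ℝ) / (n ^ 2 - n + 1 : ℝ)) := by
  clear hq
  classical
  set N : ℕ := n ^ 2 - n + 1 with hNdef
  have hn2 : n ≤ n ^ 2 := Nat.le_self_pow two_ne_zero n
  have hNpos : 0 < N := Nat.succ_pos _
  haveI : NeZero N := ⟨hNpos.ne'⟩
  have hNsub : N - 1 = n ^ 2 - n := by rw [hNdef]; simp
  have h1n : (1:ℝ) ≤ (n:ℝ) := by exact_mod_cast Nat.one_le_of_lt hn
  have hNR : (N : ℝ) = (n:ℝ)^2 - n + 1 := by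
    rw [hNdef, Nat.cast_add, Nat.cast_sub hn2]
    push_cast
    ring
  have hNC : (N : ℂ) = (n:ℂ)^2 - n + 1 := by
    rw [hNdef, Nat.cast_add, Nat.cast_sub hn2]
    push_cast
    ring
  have hzne : ∀ k, z k ≠ 0 := by
    intro k h
    have := hz k
    rw [h] at this
    simp at this
  have hinv : ∀ k, (starRingEnd ℂ) (z k) = (z k)⁻¹ := by
    intro k
    have h1 : z k * (starRingEnd ℂ) (z k) = 1 := by
      rw [Complex.mul_conj, Complex.normSq_eq_norm_sq, hz k]
      norm_num
    exact eq_inv_of_mul_eq_one_right h1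
  set T : ℤ → ℂ := fun m => ∑ k, z k ^ m with hTdef
  have hT0 : T 0 = n := by simp [hTdef]
  have hTconj : ∀ m : ℤ, (starRingEnd ℂ) (T m) = T (-m) := by
    intro m
    simp only [hTdef, map_sum]
    refine Finset.sum_congr rfl fun k _ => ?_
    rw [map_zpow₀, hinv k, inv_zpow, ← zpow_neg]
  have hTmul : ∀ m : ℤ, T m * T (-m) = (Complex.normSq (T m) : ℂ) := by
    intro m
    rw [← hTconj m, Complex.mul_conj]
  have hTbound : ∀ m : ℤ, m ≠ 0 → m.natAbs ≤ n ^ 2 - n → Complex.normSq (T m) ≤ (n:ℝ) - 1 := by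
    intro m hm hmle
    have habs : ‖T m‖ = ‖T ((m.natAbs : ℕ) : ℤ)‖ := by
      rcases Int.natAbs_eq m with h | h
      · rw [← h]
      · conv_lhs => rw [h]
        rw [← hTconj, Complex.norm_conj]
    have hmem : m.natAbs ∈ Finset.Icc 1 (n ^ 2 - n) := by
      rw [Finset.mem_Icc]
      exact ⟨Int.natAbs_pos.mpr hm, hmle⟩
    have hle := Finset.le_sup' (fun ν => ‖∑ k, z k ^ ν‖) hmem
    rw [hmax] at hle
    have hTnat : T ((m.natAbs : ℕ) : ℤ) = ∑ k, z k ^ m.natAbs := by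
      simp only [hTdef]
      exact Finset.sum_congr rfl fun k _ => zpow_natCast _ _
    have h2 : ‖T m‖ ≤ Real.sqrt ((n:ℝ) - 1) := by
      rw [habs, hTnat]; exact hle
    have h3 : (0:ℝ) ≤ (n:ℝ) - 1 := by linarith
    calc Complex.normSq (T m) = ‖T m‖^2 := (Complex.sq_norm _).symm
      _ ≤ (Real.sqrt ((n:ℝ) - 1))^2 := by
          have := norm_nonneg (T m)
          nlinarith [Real.sqrt_nonneg ((n:ℝ)-1)]
      _ = (n:ℝ) - 1 := Real.sq_sqrt h3
  set D : Fin n → Fin n → ℂ := fun j k => ∑ ν ∈ Finset.range N, (z j * (z k)⁻¹) ^ ν with hDdef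
  have hDdiag : ∀ j, D j j = (N : ℂ) := by
    intro j
    simp [hDdef, mul_inv_cancel₀ (hzne j)]
  have hDconj : ∀ j k, (starRingEnd ℂ) (D j k) = D k j := by
    intro j k
    simp only [hDdef, map_sum, map_pow, map_mul, map_inv₀, hinv j, hinv k, inv_inv]
    refine Finset.sum_congr rfl fun ν _ => ?_
    ring
  have hDmul : ∀ j k, D j k * D k j = (Complex.normSq (D j k) : ℂ) := by
    intro j k
    rw [← hDconj j k, Complex.mul_conj]
  -- the key double-counting identity
  have E1 : ∑ ν ∈ range N, ∑ μ ∈ range N, (T ((ν:ℤ) - μ) * T ((μ:ℤ) - ν))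
      = ∑ j, ∑ k, D j k * D k j := by
    have lhs : ∀ ν μ : ℕ, T ((ν:ℤ) - μ) * T ((μ:ℤ) - ν)
        = ∑ j, ∑ k, z j ^ ((ν:ℤ) - μ) * z k ^ ((μ:ℤ) - ν) := by
      intro ν μ
      simp only [hTdef]
      rw [Finset.sum_mul_sum]
    have rhs : ∀ j k, D j k * D k j
        = ∑ ν ∈ range N, ∑ μ ∈ range N, z j ^ ((ν:ℤ) - μ) * z k ^ ((μ:ℤ) - ν) := by
      intro j k
      simp only [hDdef]
      rw [Finset.sum_mul_sum]
      exact sum_congr rfl fun ν _ => sum_congr rfl fun μ _ =>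
        helper_powkey _ _ (hzne j) (hzne k) ν μ
    calc ∑ ν ∈ range N, ∑ μ ∈ range N, (T ((ν:ℤ) - μ) * T ((μ:ℤ) - ν))
        = ∑ ν ∈ range N, ∑ μ ∈ range N, ∑ j, ∑ k,
            z j ^ ((ν:ℤ) - μ) * z k ^ ((μ:ℤ) - ν) :=
          sum_congr rfl fun ν _ => sum_congr rfl fun μ _ => lhs ν μ
      _ = ∑ ν ∈ range N, ∑ j, ∑ μ ∈ range N, ∑ k,
            z j ^ ((ν:ℤ) - μ) * z k ^ ((μ:ℤ) - ν) :=
          sum_congr rfl fun ν _ => Finset.sum_comm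
      _ = ∑ j, ∑ ν ∈ range N, ∑ μ ∈ range N, ∑ k,
            z j ^ ((ν:ℤ) - μ) * z k ^ ((μ:ℤ) - ν) := Finset.sum_comm
      _ = ∑ j, ∑ ν ∈ range N, ∑ k, ∑ μ ∈ range N,
            z j ^ ((ν:ℤ) - μ) * z k ^ ((μ:ℤ) - ν) :=
          sum_congr rfl fun j _ => sum_congr rfl fun ν _ => Finset.sum_comm
      _ = ∑ j, ∑ k, ∑ ν ∈ range N, ∑ μ ∈ range N,
            z j ^ ((ν:ℤ) - μ) * z k ^ ((μ:ℤ) - ν) :=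
          sum_congr rfl fun j _ => Finset.sum_comm
      _ = ∑ j, ∑ k, D j k * D k j :=
          sum_congr rfl fun j _ => sum_congr rfl fun k _ => (rhs j k).symm
  have E2 : ∑ ν ∈ range N, ∑ μ ∈ range N, Complex.normSq (T ((ν:ℤ) - μ))
      = ∑ j, ∑ k, Complex.normSq (D j k) := by
    have hL : ∑ ν ∈ range N, ∑ μ ∈ range N, (T ((ν:ℤ) - μ) * T ((μ:ℤ) - ν))
        = ((∑ ν ∈ range N, ∑ μ ∈ range N, Complex.normSq (T ((ν:ℤ) - μ)) : ℝ) : ℂ) := by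
      push_cast
      refine sum_congr rfl fun ν _ => sum_congr rfl fun μ _ => ?_
      rw [show ((μ:ℤ) - ν) = -((ν:ℤ) - μ) by ring, hTmul]
    have hR : ∑ j, ∑ k, D j k * D k j
        = ((∑ j, ∑ k, Complex.normSq (D j k) : ℝ) : ℂ) := by
      push_cast
      exact sum_congr rfl fun j _ => sum_congr rfl fun k _ => hDmul j k
    have := E1
    rw [hL, hR] at this
    exact_mod_cast this
  -- diagonal splits
  have hfreq : ∑ ν ∈ range N, ∑ μ ∈ range N, Complex.normSq (T ((ν:ℤ) - μ))
      = (N:ℝ) * (n:ℝ)^2 + ∑ ν ∈ range N, ∑ μ ∈ (range N).erase ν,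
          Complex.normSq (T ((ν:ℤ) - μ)) := by
    have hstep : ∀ ν ∈ range N, ∑ μ ∈ range N, Complex.normSq (T ((ν:ℤ) - μ))
        = (n:ℝ)^2 + ∑ μ ∈ (range N).erase ν, Complex.normSq (T ((ν:ℤ) - μ)) := by
      intro ν hν
      rw [← Finset.add_sum_erase _ _ hν]
      congr 2
      rw [sub_self, hT0]
      rw [Complex.normSq_natCast]
      ring
    rw [Finset.sum_congr rfl hstep, Finset.sum_add_distrib, Finset.sum_const,
      Finset.card_range, nsmul_eq_mul]
  have hspat : ∑ j, ∑ k, Complex.normSq (D j k)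
      = (n:ℝ) * (N:ℝ)^2 + ∑ j, ∑ k ∈ Finset.univ.erase j, Complex.normSq (D j k) := by
    have hstep : ∀ j : Fin n, ∑ k, Complex.normSq (D j k)
        = (N:ℝ)^2 + ∑ k ∈ Finset.univ.erase j, Complex.normSq (D j k) := by
      intro j
      rw [← Finset.add_sum_erase _ _ (Finset.mem_univ j)]
      congr 2
      rw [hDdiag j, Complex.normSq_natCast]
      ring
    calc ∑ j, ∑ k, Complex.normSq (D j k)
        = ∑ j : Fin n, ((N:ℝ)^2 + ∑ k ∈ Finset.univ.erase j, Complex.normSq (D j k)) :=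
          Finset.sum_congr rfl fun j _ => hstep j
      _ = _ := by
          rw [Finset.sum_add_distrib, Finset.sum_const, Finset.card_univ, Fintype.card_fin,
            nsmul_eq_mul]
  -- off-diagonal frequency bound
  have hQle : ∀ ν ∈ range N, ∀ μ ∈ (range N).erase ν,
      Complex.normSq (T ((ν:ℤ) - μ)) ≤ (n:ℝ) - 1 := by
    intro ν hν μ hμ
    have hne : μ ≠ ν := Finset.ne_of_mem_erase hμ
    have hμN : μ < N := Finset.mem_range.mp (Finset.mem_of_mem_erase hμ)
    have hνN : ν < N := Finset.mem_range.mp hν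
    apply hTbound
    · intro h
      apply hne
      omega
    · rw [← hNsub]
      omega
  have hinner_le : ∀ ν ∈ range N, ∑ μ ∈ (range N).erase ν, Complex.normSq (T ((ν:ℤ) - μ))
      ≤ ((N:ℝ) - 1) * ((n:ℝ) - 1) := by
    intro ν hν
    calc ∑ μ ∈ (range N).erase ν, Complex.normSq (T ((ν:ℤ) - μ))
        ≤ ((range N).erase ν).card • ((n:ℝ) - 1) :=
          Finset.sum_le_card_nsmul _ _ _ (hQle ν hν)
      _ = ((N:ℝ) - 1) * ((n:ℝ) - 1) := by
          rw [Finset.card_erase_of_mem hν, Finset.card_range, nsmul_eq_mul,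
            Nat.cast_sub hNpos, Nat.cast_one]
  have hPnn : (0:ℝ) ≤ ∑ j, ∑ k ∈ Finset.univ.erase j, Complex.normSq (D j k) :=
    Finset.sum_nonneg fun j _ => Finset.sum_nonneg fun k _ => Complex.normSq_nonneg _
  have hQsum_le : ∑ ν ∈ range N, ∑ μ ∈ (range N).erase ν, Complex.normSq (T ((ν:ℤ) - μ))
      ≤ (N:ℝ) * (((N:ℝ) - 1) * ((n:ℝ) - 1)) := by
    calc ∑ ν ∈ range N, ∑ μ ∈ (range N).erase ν, Complex.normSq (T ((ν:ℤ) - μ))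
        ≤ ∑ _ν ∈ range N, ((N:ℝ) - 1) * ((n:ℝ) - 1) :=
          Finset.sum_le_sum hinner_le
      _ = (N:ℝ) * (((N:ℝ) - 1) * ((n:ℝ) - 1)) := by
          rw [Finset.sum_const, Finset.card_range, nsmul_eq_mul]
  have hkey : (N:ℝ) * (n:ℝ)^2 + (N:ℝ) * (((N:ℝ) - 1) * ((n:ℝ) - 1)) = (n:ℝ) * (N:ℝ)^2 := by
    rw [hNR]; ring
  -- combine
  have hEE : (N:ℝ) * (n:ℝ)^2 + ∑ ν ∈ range N, ∑ μ ∈ (range N).erase ν,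
        Complex.normSq (T ((ν:ℤ) - μ))
      = (n:ℝ) * (N:ℝ)^2 + ∑ j, ∑ k ∈ Finset.univ.erase j, Complex.normSq (D j k) := by
    rw [← hfreq, ← hspat, E2]
  have hP0 : ∑ j, ∑ k ∈ Finset.univ.erase j, Complex.normSq (D j k) = 0 := by
    nlinarith [hQsum_le, hPnn, hkey, hEE]
  have hQeq : ∑ ν ∈ range N, ∑ μ ∈ (range N).erase ν, Complex.normSq (T ((ν:ℤ) - μ))
      = (N:ℝ) * (((N:ℝ) - 1) * ((n:ℝ) - 1)) := by
    nlinarith [hQsum_le, hPnn, hkey, hEE]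
  -- extract: D j k = 0 for j ≠ k
  have hD0 : ∀ j k : Fin n, k ≠ j → D j k = 0 := by
    intro j k hkj
    have h1 := (Finset.sum_eq_zero_iff_of_nonneg
      (fun j _ => Finset.sum_nonneg fun k _ => Complex.normSq_nonneg (D j k))).mp hP0
      j (Finset.mem_univ j)
    have h2 := (Finset.sum_eq_zero_iff_of_nonneg
      (fun k _ => Complex.normSq_nonneg (D j k))).mp h1 k
      (Finset.mem_erase.mpr ⟨hkj, Finset.mem_univ k⟩)
    exact Complex.normSq_eq_zero.mp h2
  -- extract: |T ν|² = n - 1 for ν ≠ 0 in range N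
  have hexact : ∀ ν ∈ range N, ∀ μ ∈ (range N).erase ν,
      Complex.normSq (T ((ν:ℤ) - μ)) = (n:ℝ) - 1 := by
    have hout := helper_eq_of_sum (s := range N)
      (f := fun ν => ∑ μ ∈ (range N).erase ν, Complex.normSq (T ((ν:ℤ) - μ)))
      (b := ((N:ℝ) - 1) * ((n:ℝ) - 1)) hinner_le
      (by rw [Finset.card_range]; rw [hQeq])
    intro ν hν
    refine helper_eq_of_sum (hQle ν hν) ?_
    rw [Finset.card_erase_of_mem hν, Finset.card_range, Nat.cast_sub hNpos, Nat.cast_one]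
    exact (hout ν hν).ge
  have hSval : ∀ ν : ℕ, ν ∈ range N → ν ≠ 0 → Complex.normSq (T (ν:ℤ)) = (n:ℝ) - 1 := by
    intro ν hν hν0
    have h0mem : (0:ℕ) ∈ (range N).erase ν :=
      Finset.mem_erase.mpr ⟨Ne.symm hν0, Finset.mem_range.mpr hNpos⟩
    have := hexact ν hν 0 h0mem
    simpa using this
  -- construct the exponents
  set k0 : Fin n := ⟨0, by omega⟩ with hk0def
  set α := z k0 with hαdef
  have hαne : α ≠ 0 := hzne k0
  have hw1 : ∀ k, (z k * α⁻¹) ^ N = 1 := by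
    intro k
    by_cases hk : k = k0
    · rw [hk, mul_inv_cancel₀ hαne, one_pow]
    · have hD := hD0 k k0 (Ne.symm hk)
      simp only [hDdef] at hD
      exact (helper_geom_zero hNpos hD).1
  have hζprim : IsPrimitiveRoot (Complex.exp (2 * π * Complex.I / N)) N :=
    Complex.isPrimitiveRoot_exp N hNpos.ne'
  set ζ : ℂ := Complex.exp (2 * π * Complex.I / N) with hζdef
  have hζne : ζ ≠ 0 := Complex.exp_ne_zero _
  choose a' ha'lt ha' using fun k => hζprim.eq_pow_of_pow_eq_one (hw1 k)
  have hzk : ∀ k, z k = α * ζ ^ (a' k) := by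
    intro k
    rw [ha' k, mul_comm (z k) α⁻¹, ← mul_assoc, mul_inv_cancel₀ hαne, one_mul]
  have hzdiff : ∀ j k, z j * (z k)⁻¹ = ζ ^ ((a' j : ℤ) - (a' k : ℤ)) := by
    intro j k
    rw [hzk j, hzk k, zpow_sub₀ hζne, zpow_natCast, zpow_natCast]
    field_simp
  have hroot : ∀ t : ℤ, (ζ ^ t) ^ N = 1 := by
    intro t
    rw [← zpow_natCast (ζ ^ t) N, ← zpow_mul, mul_comm, zpow_mul, zpow_natCast,
      hζprim.pow_eq_one, one_zpow]
  refine ⟨α, fun k => (a' k : ℤ), hz k0, ?_, ?_⟩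
  · -- perfect difference set property
    intro c hc
    set c' : ℤ := (c.val : ℤ) with hc'def
    have hcast_c' : ((c' : ℤ) : ZMod N) = c := by
      rw [hc'def]
      push_cast
      rw [ZMod.natCast_val, ZMod.cast_id]
    have hdvd_iff : ∀ t : ℤ, (((t : ℤ) : ZMod N) = c) ↔ (N:ℤ) ∣ (t - c') := by
      intro t
      rw [← ZMod.intCast_zmod_eq_zero_iff_dvd]
      push_cast
      rw [sub_eq_zero, hcast_c']
    set P : Fin n × Fin n → Prop := fun p => (((a' p.1 : ℤ) - (a' p.2 : ℤ) : ℤ) : ZMod N) = c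
      with hPdef
    set s : Finset (Fin n × Fin n) := Finset.univ.filter P with hsdef
    have hz_pow : ∀ (ν : ℕ) (j k : Fin n),
        (z j) ^ (ν:ℤ) * (z k) ^ (-(ν:ℤ)) = (ζ ^ ((a' j : ℤ) - (a' k : ℤ))) ^ ν := by
      intro ν j k
      rw [← hzdiff j k, zpow_neg, zpow_natCast, zpow_natCast, mul_pow, inv_pow]
    have hTT : ∀ ν : ℕ, T (ν:ℤ) * T (-(ν:ℤ))
        = ∑ j, ∑ k, (ζ ^ ((a' j : ℤ) - (a' k : ℤ))) ^ ν := by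
      intro ν
      simp only [hTdef]
      rw [Finset.sum_mul_sum]
      exact Finset.sum_congr rfl fun j _ => Finset.sum_congr rfl fun k _ => hz_pow ν j k
    have hQa : ∑ ν ∈ range N, (ζ ^ (-c')) ^ ν * (T (ν:ℤ) * T (-(ν:ℤ)))
        = (s.card : ℂ) * N := by
      calc ∑ ν ∈ range N, (ζ ^ (-c')) ^ ν * (T (ν:ℤ) * T (-(ν:ℤ)))
          = ∑ ν ∈ range N, ∑ j, ∑ k, (ζ ^ ((a' j : ℤ) - (a' k : ℤ) - c')) ^ ν := by
            refine Finset.sum_congr rfl fun ν _ => ?_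
            rw [hTT ν, Finset.mul_sum]
            refine Finset.sum_congr rfl fun j _ => ?_
            rw [Finset.mul_sum]
            refine Finset.sum_congr rfl fun k _ => ?_
            rw [← mul_pow, ← zpow_add₀ hζne]
            congr 2
            ring
        _ = ∑ j, ∑ ν ∈ range N, ∑ k, (ζ ^ ((a' j : ℤ) - (a' k : ℤ) - c')) ^ ν :=
            Finset.sum_comm
        _ = ∑ j, ∑ k, ∑ ν ∈ range N, (ζ ^ ((a' j : ℤ) - (a' k : ℤ) - c')) ^ ν :=
            Finset.sum_congr rfl fun j _ => Finset.sum_comm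
        _ = ∑ j, ∑ k, (if P (j, k) then (N:ℂ) else 0) := by
            refine Finset.sum_congr rfl fun j _ => Finset.sum_congr rfl fun k _ => ?_
            rw [helper_geom hNpos _ (hroot _)]
            congr 1
            rw [hζprim.zpow_eq_one_iff_dvd]
            rw [eq_iff_iff]
            exact (hdvd_iff _).symm
        _ = ∑ p : Fin n × Fin n, (if P p then (N:ℂ) else 0) :=
            (Fintype.sum_prod_type (f := fun p => if P p then (N:ℂ) else 0)).symm
        _ = (s.card : ℂ) * N := by
            rw [← Finset.sum_filter, ← hsdef, Finset.sum_const, nsmul_eq_mul]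
    have hQb : ∑ ν ∈ range N, (ζ ^ (-c')) ^ ν * (T (ν:ℤ) * T (-(ν:ℤ))) = (N:ℂ) := by
      have h0N : (0:ℕ) ∈ range N := Finset.mem_range.mpr hNpos
      rw [← Finset.add_sum_erase _ _ h0N]
      have hterm0 : (ζ ^ (-c')) ^ (0:ℕ) * (T ((0:ℕ):ℤ) * T (-((0:ℕ):ℤ))) = (n:ℂ)^2 := by
        norm_num [hT0]
        ring
      have hrest : ∑ ν ∈ (range N).erase 0, (ζ ^ (-c')) ^ ν * (T (ν:ℤ) * T (-(ν:ℤ)))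
          = ((n:ℂ) - 1) * ∑ ν ∈ (range N).erase 0, (ζ ^ (-c')) ^ ν := by
        rw [Finset.mul_sum]
        refine Finset.sum_congr rfl fun ν hν => ?_
        have hν0 : ν ≠ 0 := Finset.ne_of_mem_erase hν
        have hνN : ν ∈ range N := Finset.mem_of_mem_erase hν
        rw [hTmul ((ν:ℕ):ℤ), hSval ν hνN hν0]
        push_cast
        ring
      have hne1 : ζ ^ (-c') ≠ 1 := by
        rw [Ne, hζprim.zpow_eq_one_iff_dvd]
        intro hdvd
        rw [dvd_neg] at hdvd
        rw [hc'def] at hdvd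
        have h1 : (N:ℕ) ∣ c.val := by exact_mod_cast hdvd
        have h2 : c.val < N := ZMod.val_lt c
        have h3 : c.val ≠ 0 := fun h => hc ((ZMod.val_eq_zero c).mp h)
        have h4 := Nat.le_of_dvd (Nat.pos_of_ne_zero h3) h1
        omega
      have hsum0 : ∑ ν ∈ range N, (ζ ^ (-c')) ^ ν = 0 := by
        have := helper_geom hNpos (ζ ^ (-c')) (hroot _)
        rw [if_neg hne1] at this
        exact this
      have herased : ∑ ν ∈ (range N).erase 0, (ζ ^ (-c')) ^ ν = -1 := by
        have h := Finset.add_sum_erase (range N) (fun ν => (ζ ^ (-c')) ^ ν) h0N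
        rw [hsum0] at h
        simp only [pow_zero] at h
        linear_combination h
      rw [hterm0, hrest, herased, hNC]
      ring
    have hNC0 : (N:ℂ) ≠ 0 := Nat.cast_ne_zero.mpr hNpos.ne'
    have hcard1 : s.card = 1 := by
      have h1 : (s.card : ℂ) * N = 1 * N := by rw [← hQa, hQb, one_mul]
      have h2 := mul_right_cancel₀ hNC0 h1
      exact_mod_cast h2
    obtain ⟨p, hp⟩ := Finset.card_eq_one.mp hcard1
    have hpP : P p := by
      have hmem : p ∈ s := hp ▸ Finset.mem_singleton_self p
      exact (Finset.mem_filter.mp hmem).2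
    refine ⟨p, ⟨?_, hpP⟩, ?_⟩
    · intro h
      apply hc
      have hzero : ((a' p.1 : ℤ) - (a' p.2 : ℤ)) = 0 := by rw [h]; ring
      rw [← hpP, hzero]
      simp
    · rintro q ⟨hq1, hq2⟩
      have hmem : q ∈ s := Finset.mem_filter.mpr ⟨Finset.mem_univ q, hq2⟩
      rw [hp] at hmem
      exact Finset.mem_singleton.mp hmem
  · -- the explicit form
    intro k
    rw [hzk k]
    congr 1
    rw [← Complex.exp_nat_mul]
    congr 1
    have hden : (((n:ℝ)^2 - (n:ℝ) + 1 : ℝ) : ℂ) = (N:ℂ) := by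
      rw [← hNR]
      norm_cast
    rw [hden]
    push_cast
    ring
end

section
/- Let N ≥ 1 and let λ_1, ..., λ_N be complex numbers of modulus 1 such that ∑_{j=1}^N λ_j^ν = 0 for all ν = 1, ..., N−1, and suppose λ_1 = 1. Then {λ_1, ..., λ_N} is exactly the set of N-th roots of unity. -/
open Finset Complex Matrix

theorem roots_of_unity_of_power_sums_vanish (N : ℕ) (hN : 0 < N) (lam : Fin N → ℂ)
    (hlam : ∀ j, ‖lam j‖ = 1)
    (hS : ∀ ν ∈ Finset.Icc 1 (N - 1), ∑ j, lam j ^ ν = 0)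
    (h1 : lam ⟨0, hN⟩ = 1) :
    Set.range lam = {x : ℂ | x ^ N = 1} := by
  have hne0 : ∀ j, lam j ≠ 0 := by
    intro j h
    have := hlam j
    rw [h] at this
    simp at this
  have hinv : ∀ j, (lam j)⁻¹ = (starRingEnd ℂ) (lam j) := by
    intro j
    exact Complex.inv_eq_conj (hlam j)
  have hstar : ∀ j, star (lam j) = (lam j)⁻¹ := by
    intro j
    rw [hinv j]
    rfl
  have hNC : (N : ℂ) ≠ 0 := Nat.cast_ne_zero.mpr hN.ne'
  -- inverse power sums vanish too
  have hzk : ∀ m ∈ Finset.Icc 1 (N - 1), ∑ j, ((lam j)⁻¹) ^ m = 0 := by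
    intro m hm
    have : ∑ j, ((lam j)⁻¹) ^ m = (starRingEnd ℂ) (∑ j, lam j ^ m) := by
      rw [map_sum]
      exact Finset.sum_congr rfl fun j _ => by rw [hinv, ← map_pow]
    rw [this, hS m hm, map_zero]
  -- key orthogonality of rows
  have hkey : ∀ a b : ℕ, a < N → b < N →
      ∑ j, lam j ^ a * ((lam j)⁻¹) ^ b = if a = b then (N : ℂ) else 0 := by
    intro a b ha hb
    rcases lt_trichotomy a b with h | h | h
    · rw [if_neg h.ne]
      have he : ∀ j : Fin N, lam j ^ a * ((lam j)⁻¹) ^ b = ((lam j)⁻¹) ^ (b - a) := by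
        intro j
        rw [inv_pow, inv_pow, pow_sub₀ _ (hne0 j) h.le, mul_inv, inv_inv, mul_comm]
      rw [Finset.sum_congr rfl fun j _ => he j]
      exact hzk (b - a) (Finset.mem_Icc.mpr ⟨by omega, by omega⟩)
    · subst h
      rw [if_pos rfl]
      have he : ∀ j : Fin N, lam j ^ a * ((lam j)⁻¹) ^ a = 1 := by
        intro j
        rw [← mul_pow, mul_inv_cancel₀ (hne0 j), one_pow]
      rw [Finset.sum_congr rfl fun j _ => he j]
      simp
    · rw [if_neg h.ne']
      have he : ∀ j : Fin N, lam j ^ a * ((lam j)⁻¹) ^ b = lam j ^ (a - b) := by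
        intro j
        rw [inv_pow, ← pow_sub₀ _ (hne0 j) h.le]
      rw [Finset.sum_congr rfl fun j _ => he j]
      exact hS (a - b) (Finset.mem_Icc.mpr ⟨by omega, by omega⟩)
  set M : Matrix (Fin N) (Fin N) ℂ := fun ν j => lam j ^ (ν : ℕ) with hM
  have hMMt : M * Mᴴ = (N : ℂ) • (1 : Matrix (Fin N) (Fin N) ℂ) := by
    ext ν μ
    have : ∀ j : Fin N, M ν j * (Mᴴ) j μ = lam j ^ (ν : ℕ) * ((lam j)⁻¹) ^ (μ : ℕ) := by
      intro j
      rw [Matrix.conjTranspose_apply]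
      simp only [hM]
      rw [star_pow, hstar, inv_pow]
    rw [Matrix.mul_apply, Finset.sum_congr rfl fun j _ => this j,
      hkey ν μ ν.isLt μ.isLt]
    simp only [Matrix.smul_apply, Matrix.one_apply, smul_eq_mul, Fin.val_eq_val]
    split_ifs <;> simp
  have hMinv : M * ((N : ℂ)⁻¹ • Mᴴ) = 1 := by
    rw [Matrix.mul_smul, hMMt, smul_smul, inv_mul_cancel₀ hNC, one_smul]
  have hMtM : Mᴴ * M = (N : ℂ) • (1 : Matrix (Fin N) (Fin N) ℂ) := by
    have h2 := mul_eq_one_comm.mp hMinv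
    calc Mᴴ * M = (N : ℂ) • (((N : ℂ)⁻¹ • Mᴴ) * M) := by
          rw [Matrix.smul_mul, smul_smul, mul_inv_cancel₀ hNC, one_smul]
      _ = (N : ℂ) • 1 := by rw [h2]
  -- column orthogonality consequences
  have horth : ∀ j k : Fin N, j ≠ k →
      (lam j)⁻¹ * lam k ≠ 1 ∧ ((lam j)⁻¹ * lam k) ^ N = 1 := by
    intro j k hjk
    have hcol : ∑ ν : Fin N, ((lam j)⁻¹ * lam k) ^ (ν : ℕ) = 0 := by
      have h0 := congrFun (congrFun hMtM j) k
      simp only [Matrix.smul_apply, Matrix.one_apply, if_neg hjk, smul_eq_mul,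
        mul_zero] at h0
      rw [Matrix.mul_apply] at h0
      rw [← h0]
      refine Finset.sum_congr rfl fun ν _ => ?_
      rw [Matrix.conjTranspose_apply]
      simp only [hM]
      rw [star_pow, hstar, mul_pow]
    set t : ℂ := (lam j)⁻¹ * lam k with ht
    have hsum : ∑ i ∈ Finset.range N, t ^ i = 0 := by
      rw [← Fin.sum_univ_eq_sum_range]
      exact hcol
    have ht1 : t ≠ 1 := by
      intro h
      rw [h] at hsum
      simp at hsum
      exact hN.ne' hsum
    constructor
    · exact ht1
    · have hgeom := geom_sum_mul t N
      rw [hsum, zero_mul] at hgeom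
      exact sub_eq_zero.mp hgeom.symm
  have hpow : ∀ k, lam k ^ N = 1 := by
    intro k
    rcases eq_or_ne k ⟨0, hN⟩ with rfl | hk
    · rw [h1, one_pow]
    · have h := (horth ⟨0, hN⟩ k (Ne.symm hk)).2
      rw [h1, inv_one, one_mul] at h
      exact h
  have hinj : Function.Injective lam := by
    intro j k h
    by_contra hjk
    have := (horth j k hjk).1
    rw [← h, inv_mul_cancel₀ (hne0 j)] at this
    exact this rfl
  -- counting
  have hprim := Complex.isPrimitiveRoot_exp N hN.ne'
  have hsub : Finset.univ.image lam ⊆ Polynomial.nthRootsFinset N (1 : ℂ) := by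
    intro x hx
    rw [Finset.mem_image] at hx
    obtain ⟨j, _, rfl⟩ := hx
    exact (Polynomial.mem_nthRootsFinset hN 1).mpr (hpow j)
  have hcard : (Finset.univ.image lam).card = N := by
    rw [Finset.card_image_of_injective _ hinj, Finset.card_univ, Fintype.card_fin]
  have heq : Finset.univ.image lam = Polynomial.nthRootsFinset N (1 : ℂ) :=
    Finset.eq_of_subset_of_card_le hsub (by rw [hprim.card_nthRootsFinset, hcard])
  ext x
  simp only [Set.mem_range, Set.mem_setOf_eq]
  constructor
  · rintro ⟨j, rfl⟩
    exact hpow j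
  · intro hx
    have : x ∈ Finset.univ.image lam := by
      rw [heq]
      exact (Polynomial.mem_nthRootsFinset hN 1).mpr hx
    rw [Finset.mem_image] at this
    obtain ⟨j, _, rfl⟩ := this
    exact ⟨j, rfl⟩
end
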